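/- arXiv:0801.0418 — 2 statements merged into one kernel-verified Lean document; each statement's English description precedes it below -/
import Mathlib

section
/- The space of GL(V)-equivariant linear endomorphisms of V^{⊗k} is spanned by the elementary invariant tensors t_σ, σ ∈ Σ_k. -/
set_option linter.unusedSectionVars false
set_option maxHeartbeats 1000000

open TensorProduct PiTensorProduct

noncomputable section SchurWeylAux

variable {K : Type} [Field K]
    {V : Type} [AddCommGroup V] [Module K V]
    {k : ℕ}

local notation "W" => (⨂[K] (_ : Fin k), V)
local notation "μ" => PiTensorProduct.mapMultilinear K (fun _ : Fin k => V) (fun _ : Fin k => V)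

section Tlems

variable (t : Equiv.Perm (Fin k) → (⨂[K] (_ : Fin k), V) →ₗ[K] ⨂[K] (_ : Fin k), V)
    (ht : ∀ σ (v : Fin k → V), t σ (tprod K v) = tprod K fun i => v (σ⁻¹ i))

include ht

theorem t_mul (σ τ : Equiv.Perm (Fin k)) : t σ ∘ₗ t τ = t (σ * τ) := by
  apply PiTensorProduct.ext
  ext v
  simp only [LinearMap.compMultilinearMap_apply, LinearMap.coe_comp, Function.comp_apply, ht]
  congr 1

theorem t_one : t 1 = LinearMap.id := by
  apply PiTensorProduct.ext
  ext v
  simp only [LinearMap.compMultilinearMap_apply, LinearMap.id_coe, id_eq, ht]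
  congr 1

theorem t_conj (σ : Equiv.Perm (Fin k)) (a : Fin k → V →ₗ[K] V) :
    t σ ∘ₗ PiTensorProduct.map a ∘ₗ t σ⁻¹ = PiTensorProduct.map (fun i => a (σ⁻¹ i)) := by
  apply PiTensorProduct.ext
  ext v
  simp only [LinearMap.compMultilinearMap_apply, LinearMap.coe_comp, Function.comp_apply, ht,
    map_tprod]
  congr 1
  funext i
  congr 1
  exact congrArg v (Equiv.symm_apply_apply σ⁻¹ i)



end Tlems

section Span

variable {η : Type} [Fintype η] [DecidableEq η] (e : Module.Basis η K V)

/-- the spanning family of pure tensors of basis vectors -/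
noncomputable def BB (J : Fin k → η) : W := tprod K (fun i => e (J i))

theorem span_BB : Submodule.span K (Set.range (BB (k := k) e)) = ⊤ := by
  rw [eq_top_iff, ← PiTensorProduct.span_tprod_eq_top, Submodule.span_le]
  rintro x ⟨v, rfl⟩
  have hv : (tprod K (s := fun _ : Fin k => V)) v
      = tprod K fun i => ∑ j, e.repr (v i) j • e j := by
    congr 1; funext i; rw [Module.Basis.sum_repr]
  rw [hv, MultilinearMap.map_sum]
  refine Submodule.sum_mem _ fun r _ => ?_
  rw [MultilinearMap.map_smul_univ]
  exact Submodule.smul_mem _ _ (Submodule.subset_span ⟨r, rfl⟩)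

/-- coordinate functionals -/
noncomputable def lam (I : Fin k → η) : W →ₗ[K] K :=
  PiTensorProduct.lift ((MultilinearMap.mkPiAlgebra K (Fin k) K).compLinearMap
    fun i => e.coord (I i))

theorem lam_tprod (I : Fin k → η) (v : Fin k → V) :
    lam e I (tprod K v) = ∏ i, e.coord (I i) (v i) := by
  simp [lam]

theorem lam_BB (I J : Fin k → η) : lam e I (BB e J) = if I = J then 1 else 0 := by
  rw [BB, lam_tprod]
  by_cases h : I = J
  · subst h; simp
  · rw [if_neg h]
    obtain ⟨i, hi⟩ := Function.ne_iff.mp h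
    refine Finset.prod_eq_zero (Finset.mem_univ i) ?_
    simp [Module.Basis.repr_self, Finsupp.single_apply, (Ne.symm hi)]

/-- expansion: ∑ I, lam I y • BB I = y -/
theorem expand_BB (y : W) : (∑ I : Fin k → η, lam e I y • BB e I) = y := by
  have : (∑ I : Fin k → η, (lam e I).smulRight (BB e I)) = LinearMap.id := by
    refine LinearMap.ext_on (span_BB e) ?_
    rintro x ⟨J, rfl⟩
    rw [LinearMap.sum_apply, LinearMap.id_apply]
    have : ∀ I : Fin k → η, (lam e I).smulRight (BB e I) (BB e J)
        = if I = J then BB e J else 0 := by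
      intro I
      rw [LinearMap.smulRight_apply, lam_BB, ite_smul, one_smul, zero_smul]
      split <;> simp_all
    rw [Finset.sum_congr rfl fun I _ => this I, Finset.sum_ite_eq' Finset.univ J
      (fun _ => BB e J), if_pos (Finset.mem_univ J)]
  calc (∑ I : Fin k → η, lam e I y • BB e I)
      = (∑ I : Fin k → η, (lam e I).smulRight (BB e I)) y := by
        rw [LinearMap.sum_apply]; rfl
    _ = y := by rw [this, LinearMap.id_apply]

/-- rank one endomorphisms of V -/
noncomputable def EE (p q : η) : V →ₗ[K] V := (e.coord q).smulRight (e p)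

theorem map_EE (I J L : Fin k → η) :
    PiTensorProduct.map (fun i => EE e (I i) (J i)) (BB e L)
      = if J = L then BB e I else 0 := by
  rw [BB, map_tprod]
  have : (tprod K (s := fun _ : Fin k => V)) (fun i => EE e (I i) (J i) (e (L i)))
      = tprod K fun i => (e.coord (J i) (e (L i))) • e (I i) := rfl
  rw [this, MultilinearMap.map_smul_univ]
  by_cases h : J = L
  · subst h; simp [BB]
  · obtain ⟨i, hi⟩ := Function.ne_iff.mp h
    rw [if_neg h]
    have : (∏ i, e.coord (J i) (e (L i))) = 0 := by
      refine Finset.prod_eq_zero (Finset.mem_univ i) ?_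
      simp [Module.Basis.repr_self, Finsupp.single_apply, (Ne.symm hi)]
    rw [this, zero_smul]

include e in
/-- every endomorphism of W is in the span of the `PiTensorProduct.map a` -/
theorem mem_span_maps (x : W →ₗ[K] W) :
    x ∈ Submodule.span K (Set.range fun a : Fin k → (V →ₗ[K] V) => PiTensorProduct.map a) := by
  have hx : x = ∑ I : Fin k → η, ∑ J : Fin k → η,
      lam e I (x (BB e J)) • PiTensorProduct.map (fun i => EE e (I i) (J i)) := by
    refine LinearMap.ext_on (span_BB e) ?_
    rintro y ⟨L, rfl⟩
    rw [LinearMap.sum_apply]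
    have : ∀ I : Fin k → η, (∑ J : Fin k → η,
        lam e I (x (BB e J)) • PiTensorProduct.map (fun i => EE e (I i) (J i))) (BB e L)
        = lam e I (x (BB e L)) • BB e I := by
      intro I
      rw [LinearMap.sum_apply]
      have : ∀ J : Fin k → η,
          (lam e I (x (BB e J)) • PiTensorProduct.map (fun i => EE e (I i) (J i))) (BB e L)
          = if J = L then lam e I (x (BB e L)) • BB e I else 0 := by
        intro J
        rw [LinearMap.smul_apply, map_EE]
        split
        · subst ‹J = L›; rfl
        · rw [smul_zero]
      rw [Finset.sum_congr rfl fun J _ => this J, Finset.sum_ite_eq' Finset.univ L, if_pos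
        (Finset.mem_univ L)]
    rw [Finset.sum_congr rfl fun I _ => this I, expand_BB]
  rw [hx]
  refine Submodule.sum_mem _ fun I _ => Submodule.sum_mem _ fun J _ =>
    Submodule.smul_mem _ _ (Submodule.subset_span ⟨_, rfl⟩)



end Span

section Polar

theorem step1 (a : Fin k → V →ₗ[K] V) (S : Finset (Fin k)) :
    μ (fun _ => ∑ i ∈ S, a i)
      = ∑ φ : Fin k → Fin k, if (∀ i, φ i ∈ S) then μ (fun i => a (φ i)) else 0 := by
  classical
  have h1 : (fun _ : Fin k => ∑ i ∈ S, a i)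
      = fun _ : Fin k => ∑ j : Fin k, if j ∈ S then a j else 0 := by
    funext _
    rw [Finset.sum_ite_mem, Finset.univ_inter]
  rw [h1, MultilinearMap.map_sum]
  refine Finset.sum_congr rfl fun φ _ => ?_
  by_cases h : ∀ i, φ i ∈ S
  · rw [if_pos h]
    congr 1
    funext i
    rw [if_pos (h i)]
  · rw [if_neg h]
    push_neg at h
    obtain ⟨i, hi⟩ := h
    refine MultilinearMap.map_coord_zero _ i ?_
    rw [if_neg hi]

theorem coeff_sum (φ : Fin k → Fin k) :
    (∑ S : Finset (Fin k), if (∀ i, φ i ∈ S) then ((-1 : K)) ^ (k - S.card) else 0)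
      = if Function.Surjective φ then 1 else 0 := by
  classical
  set T : Finset (Fin k) := Finset.image φ Finset.univ with hT
  have key : ∀ S : Finset (Fin k), (∀ i, φ i ∈ S) ↔ T ⊆ S := by
    intro S
    constructor
    · intro h x hx
      obtain ⟨i, _, rfl⟩ := Finset.mem_image.mp hx
      exact h i
    · intro h i
      exact h (Finset.mem_image.mpr ⟨i, Finset.mem_univ i, rfl⟩)
  have hcompl : ∀ S : Finset (Fin k), (k - S.card) = Sᶜ.card := by
    intro S
    rw [Finset.card_compl, Fintype.card_fin]
  have e : Equiv.Perm (Finset (Fin k)) := Function.Involutive.toPerm _ compl_involutive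
  calc (∑ S : Finset (Fin k), if (∀ i, φ i ∈ S) then ((-1 : K)) ^ (k - S.card) else 0)
      = ∑ U : Finset (Fin k), if U ⊆ Tᶜ then ((-1 : K)) ^ U.card else 0 := by
        refine Fintype.sum_equiv (Function.Involutive.toPerm _ compl_involutive) _ _ ?_
        intro S
        simp only [Function.Involutive.coe_toPerm]
        rw [hcompl]
        by_cases h : ∀ i, φ i ∈ S
        · rw [if_pos h]
          exact (if_pos (Finset.compl_subset_compl.mpr ((key S).mp h))).symm
        · rw [if_neg h]
          exact (if_neg (fun hc => h ((key S).mpr (Finset.compl_subset_compl.mp hc)))).symm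
    _ = ∑ U ∈ (Tᶜ).powerset, ((-1 : K)) ^ U.card := by
        rw [← Finset.sum_filter]
        congr 1
        ext U
        simp [Finset.mem_powerset]
    _ = if Tᶜ = ∅ then 1 else 0 := by
        have h := Finset.sum_powerset_neg_one_pow_card (x := Tᶜ)
        have h2 := congrArg (fun z : ℤ => (z : K)) h
        push_cast at h2
        rw [h2]
    _ = if Function.Surjective φ then 1 else 0 := by
        congr 1
        rw [Finset.compl_eq_empty_iff, eq_iff_iff]
        constructor
        · intro h x
          have : x ∈ T := h ▸ Finset.mem_univ x
          obtain ⟨i, _, rfl⟩ := Finset.mem_image.mp this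
          exact ⟨i, rfl⟩
        · intro h
          refine Finset.eq_univ_of_forall fun x => ?_
          obtain ⟨i, rfl⟩ := h x
          exact Finset.mem_image.mpr ⟨i, Finset.mem_univ i, rfl⟩

theorem step2 (a : Fin k → V →ₗ[K] V) :
    (∑ σ : Equiv.Perm (Fin k), PiTensorProduct.map (fun i => a (σ i)))
      = ∑ S : Finset (Fin k),
          ((-1 : K)) ^ (k - S.card) • PiTensorProduct.map (fun _ : Fin k => ∑ i ∈ S, a i) := by
  classical
  have hμ : ∀ b : Fin k → V →ₗ[K] V, PiTensorProduct.map b = μ b := fun _ => rfl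
  calc (∑ σ : Equiv.Perm (Fin k), PiTensorProduct.map (fun i => a (σ i)))
      = ∑ φ ∈ Finset.univ.filter (fun φ : Fin k → Fin k => Function.Surjective φ),
          μ (fun i => a (φ i)) := by
        rw [Finset.sum_bij' (i := fun (φ : Fin k → Fin k)
            (hφ : φ ∈ Finset.univ.filter (fun φ : Fin k → Fin k => Function.Surjective φ)) =>
            Equiv.ofBijective φ (Finite.surjective_iff_bijective.mp (by
              simpa using hφ)))
          (j := fun (σ : Equiv.Perm (Fin k)) _ => ⇑σ) ?_ ?_ ?_ ?_ ?_]
        · intro φ hφ; exact Finset.mem_univ _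
        · intro σ _
          simp only [Finset.mem_filter, Finset.mem_univ, true_and]
          exact σ.surjective
        · intro φ hφ; rfl
        · intro σ _; exact Equiv.ext fun x => rfl
        · intro φ hφ; rw [hμ]; rfl
    _ = ∑ φ : Fin k → Fin k, if Function.Surjective φ then μ (fun i => a (φ i)) else 0 := by
        rw [Finset.sum_filter]
    _ = ∑ φ : Fin k → Fin k,
          (∑ S : Finset (Fin k), if (∀ i, φ i ∈ S) then ((-1 : K)) ^ (k - S.card) else 0)
            • μ (fun i => a (φ i)) := by
        refine Finset.sum_congr rfl fun φ _ => ?_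
        rw [coeff_sum, ite_smul, one_smul, zero_smul]
    _ = ∑ φ : Fin k → Fin k, ∑ S : Finset (Fin k),
          (if (∀ i, φ i ∈ S) then ((-1 : K)) ^ (k - S.card) else 0) • μ (fun i => a (φ i)) := by
        refine Finset.sum_congr rfl fun φ _ => ?_
        rw [Finset.sum_smul]
    _ = ∑ S : Finset (Fin k), ∑ φ : Fin k → Fin k,
          (if (∀ i, φ i ∈ S) then ((-1 : K)) ^ (k - S.card) else 0) • μ (fun i => a (φ i)) := by
        rw [Finset.sum_comm]
    _ = ∑ S : Finset (Fin k), ((-1 : K)) ^ (k - S.card) •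
          ∑ φ : Fin k → Fin k, if (∀ i, φ i ∈ S) then μ (fun i => a (φ i)) else 0 := by
        refine Finset.sum_congr rfl fun S _ => ?_
        rw [Finset.smul_sum]
        refine Finset.sum_congr rfl fun φ _ => ?_
        rw [ite_smul, zero_smul, smul_ite, smul_zero]
    _ = ∑ S : Finset (Fin k),
          ((-1 : K)) ^ (k - S.card) • PiTensorProduct.map (fun _ : Fin k => ∑ i ∈ S, a i) := by
        refine Finset.sum_congr rfl fun S _ => ?_
        rw [hμ, step1]

theorem sym_mem (a : Fin k → V →ₗ[K] V) :
    (∑ σ : Equiv.Perm (Fin k), PiTensorProduct.map (fun i => a (σ i)))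
      ∈ Submodule.span K (Set.range fun c : V →ₗ[K] V =>
          (PiTensorProduct.map (fun _ : Fin k => c) : W →ₗ[K] W)) := by
  rw [step2]
  exact Submodule.sum_mem _ fun S _ =>
    Submodule.smul_mem _ _ (Submodule.subset_span ⟨_, rfl⟩)



end Polar

section Interp

variable [CharZero K] [FiniteDimensional K V]

theorem expand_const (c : V →ₗ[K] V) (s : K) :
    (PiTensorProduct.map (fun _ : Fin k => c + s • LinearMap.id) : W →ₗ[K] W)
      = ∑ S : Finset (Fin k), s ^ (k - S.card) •
          PiTensorProduct.map (S.piecewise (fun _ : Fin k => c)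
            (fun _ : Fin k => (LinearMap.id : V →ₗ[K] V))) := by
  classical
  have h0 : (fun _ : Fin k => c + s • LinearMap.id)
      = (fun _ : Fin k => c) + (fun _ : Fin k => s • (LinearMap.id : V →ₗ[K] V)) := rfl
  have h1 : (PiTensorProduct.map (fun _ : Fin k => c + s • LinearMap.id) : W →ₗ[K] W)
      = μ ((fun _ : Fin k => c) + fun _ : Fin k => s • (LinearMap.id : V →ₗ[K] V)) := rfl
  rw [h1, MultilinearMap.map_add_univ]
  refine Finset.sum_congr rfl fun S _ => ?_
  have h2 : S.piecewise (fun _ : Fin k => c) (fun _ : Fin k => s • (LinearMap.id : V →ₗ[K] V))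
      = Sᶜ.piecewise (fun _ : Fin k => s • (LinearMap.id : V →ₗ[K] V))
          (S.piecewise (fun _ : Fin k => c) (fun _ : Fin k => (LinearMap.id : V →ₗ[K] V))) := by
    funext i
    by_cases h : i ∈ S <;>
      simp [Finset.piecewise, h]
  rw [h2]
  have h3 := MultilinearMap.map_piecewise_smul μ (fun _ : Fin k => s)
    (S.piecewise (fun _ : Fin k => c) (fun _ : Fin k => (LinearMap.id : V →ₗ[K] V))) Sᶜ
  have h4 : Sᶜ.piecewise (fun i => s • S.piecewise (fun _ : Fin k => c)
        (fun _ : Fin k => (LinearMap.id : V →ₗ[K] V)) i)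
        (S.piecewise (fun _ : Fin k => c) (fun _ : Fin k => (LinearMap.id : V →ₗ[K] V)))
      = Sᶜ.piecewise (fun _ : Fin k => s • (LinearMap.id : V →ₗ[K] V))
          (S.piecewise (fun _ : Fin k => c) (fun _ : Fin k => (LinearMap.id : V →ₗ[K] V))) := by
    funext i
    by_cases h : i ∈ S <;>
      simp [Finset.piecewise, h]
  rw [← h4, h3, Finset.prod_const, Finset.card_compl, Fintype.card_fin]
  rfl

theorem comm_const
    (f : W →ₗ[K] W)
    (hf : ∀ g : V ≃ₗ[K] V,
      f ∘ₗ PiTensorProduct.map (fun _ : Fin k => g.toLinearMap) =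
        PiTensorProduct.map (fun _ : Fin k => g.toLinearMap) ∘ₗ f)
    (c : V →ₗ[K] V) :
    f ∘ₗ PiTensorProduct.map (fun _ : Fin k => c)
      = PiTensorProduct.map (fun _ : Fin k => c) ∘ₗ f := by
  classical
  set Cmt : (W →ₗ[K] W) →ₗ[K] (W →ₗ[K] W) :=
    LinearMap.llcomp K W W W f - LinearMap.lcomp K W f with hCmt
  have hCmtApply : ∀ x : W →ₗ[K] W, Cmt x = f ∘ₗ x - x ∘ₗ f := fun x => rfl
  suffices hDc : Cmt (PiTensorProduct.map (fun _ : Fin k => c)) = 0 by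
    rw [hCmtApply] at hDc
    exact sub_eq_zero.mp hDc
  have hDinv : ∀ b : V →ₗ[K] V, Function.Injective b →
      Cmt (PiTensorProduct.map (fun _ : Fin k => b)) = 0 := by
    intro b hb
    have hbij : Function.Bijective b := ⟨hb, (LinearMap.injective_iff_surjective).mp hb⟩
    have hgb : (LinearEquiv.ofBijective b hbij).toLinearMap = b := rfl
    rw [hCmtApply, sub_eq_zero, ← hgb]
    exact hf (LinearEquiv.ofBijective b hbij)
  -- bad scalars are finite
  have hbad : {s : K | ¬ Function.Injective (c + s • (LinearMap.id : V →ₗ[K] V))}.Finite := by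
    have hsub : {s : K | ¬ Function.Injective (c + s • (LinearMap.id : V →ₗ[K] V))}
        ⊆ (fun r : K => -r) '' {r : K | (minpoly K c).IsRoot r} := by
      intro s hs
      have hmap : (c : Module.End K V) - (-s) • 1 = c + s • (LinearMap.id : V →ₗ[K] V) := by
        ext v
        simp only [LinearMap.sub_apply, LinearMap.smul_apply, Module.End.one_apply,
          LinearMap.add_apply, LinearMap.id_apply, neg_smul, sub_neg_eq_add]
      have h1 : Module.End.HasEigenvalue (c : Module.End K V) (-s) := by
        rw [Module.End.hasEigenvalue_iff, Module.End.eigenspace_def, hmap]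
        intro hbot
        exact hs (LinearMap.ker_eq_bot.mp hbot)
      have h2 := Module.End.hasEigenvalue_iff_isRoot.mp h1
      exact ⟨-s, h2, by ring⟩
    refine Set.Finite.subset (Set.Finite.image _ ?_) hsub
    have hint : IsIntegral K (c : Module.End K V) := Algebra.IsIntegral.isIntegral c
    exact Polynomial.finite_setOf_isRoot (minpoly.ne_zero hint)
  have hgood : {s : K | Function.Injective (c + s • (LinearMap.id : V →ₗ[K] V))}.Infinite := by
    have hun : {s : K | Function.Injective (c + s • (LinearMap.id : V →ₗ[K] V))}
        = {s : K | ¬ Function.Injective (c + s • (LinearMap.id : V →ₗ[K] V))}ᶜ := by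
      ext s; simp
    rw [hun]
    exact hbad.infinite_compl
  have key : ∀ ℓ : Module.Dual K (W →ₗ[K] W), ℓ (Cmt (PiTensorProduct.map (fun _ : Fin k => c))) = 0 := by
    intro ℓ
    set p : Polynomial K := ∑ S : Finset (Fin k),
      Polynomial.C (ℓ (Cmt (PiTensorProduct.map (S.piecewise (fun _ : Fin k => c)
          (fun _ : Fin k => (LinearMap.id : V →ₗ[K] V))))))
        * Polynomial.X ^ (k - S.card) with hp
    have heval : ∀ s : K, p.eval s
        = ℓ (Cmt (PiTensorProduct.map (fun _ : Fin k => c + s • LinearMap.id))) := by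
      intro s
      rw [expand_const, map_sum, map_sum, hp, Polynomial.eval_finset_sum]
      refine Finset.sum_congr rfl fun S _ => ?_
      rw [Polynomial.eval_mul, Polynomial.eval_C, Polynomial.eval_pow, Polynomial.eval_X,
        map_smul, map_smul, smul_eq_mul, mul_comm]
    have hroots : {s : K | p.IsRoot s}.Infinite := by
      refine Set.Infinite.mono ?_ hgood
      intro s hs
      have : Cmt (PiTensorProduct.map (fun _ : Fin k => c + s • LinearMap.id)) = 0 :=
        hDinv _ hs
      simp only [Set.mem_setOf_eq, Polynomial.IsRoot, heval, this, map_zero]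
    have hp0 : p = 0 := Polynomial.eq_zero_of_infinite_isRoot p hroots
    have h0 := heval 0
    rw [hp0] at h0
    simp only [Polynomial.eval_zero] at h0
    have : (fun _ : Fin k => c + (0:K) • LinearMap.id) = fun _ : Fin k => c := by
      funext _; rw [zero_smul, add_zero]
    rw [this] at h0
    exact h0.symm
  have := Module.forall_dual_apply_eq_zero_iff K
    (Cmt (PiTensorProduct.map (fun _ : Fin k => c)))
  exact this.mp key




variable (t : Equiv.Perm (Fin k) → (⨂[K] (_ : Fin k), V) →ₗ[K] ⨂[K] (_ : Fin k), V)
    (ht : ∀ σ (v : Fin k → V), t σ (tprod K v) = tprod K fun i => v (σ⁻¹ i))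

include ht in
theorem equivariant_mem_const_span (h : W →ₗ[K] W)
    (hcomm : ∀ σ, h ∘ₗ t σ = t σ ∘ₗ h) :
    h ∈ Submodule.span K (Set.range fun c : V →ₗ[K] V =>
        (PiTensorProduct.map (fun _ : Fin k => c) : W →ₗ[K] W)) := by
  classical
  set Av : (W →ₗ[K] W) →ₗ[K] (W →ₗ[K] W) :=
    ((k.factorial : K)⁻¹) • ∑ σ : Equiv.Perm (Fin k),
      (LinearMap.mulLeft K (t σ)).comp (LinearMap.mulRight K (t σ⁻¹)) with hAv
  have hfac : ((k.factorial : K)) ≠ 0 := by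
    exact_mod_cast Nat.cast_ne_zero.mpr (Nat.factorial_ne_zero k)
  have hAvApply : ∀ x : W →ₗ[K] W,
      Av x = (k.factorial : K)⁻¹ • ∑ σ : Equiv.Perm (Fin k), t σ * (x * t σ⁻¹) := by
    intro x
    simp [hAv, LinearMap.sum_apply]
  have hinv : ∀ σ : Equiv.Perm (Fin k), t σ * t σ⁻¹ = 1 := by
    intro σ
    have := t_mul t ht σ σ⁻¹
    rw [mul_inv_cancel] at this
    rw [Module.End.mul_eq_comp, this, t_one t ht]
    rfl
  have hAvh : Av h = h := by
    rw [hAvApply]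
    have : ∀ σ : Equiv.Perm (Fin k), t σ * (h * t σ⁻¹) = h := by
      intro σ
      have hc : t σ * h = h * t σ := by
        rw [Module.End.mul_eq_comp, Module.End.mul_eq_comp, hcomm σ]
      rw [← mul_assoc, hc, mul_assoc, hinv σ, mul_one]
    rw [Finset.sum_congr rfl fun σ _ => this σ, Finset.sum_const, Finset.card_univ,
      ← Nat.cast_smul_eq_nsmul K, smul_smul, Fintype.card_perm, Fintype.card_fin,
      inv_mul_cancel₀ hfac, one_smul]
  have hAvmem : ∀ x : W →ₗ[K] W, Av x ∈ Submodule.span K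
      (Set.range fun c : V →ₗ[K] V =>
        (PiTensorProduct.map (fun _ : Fin k => c) : W →ₗ[K] W)) := by
    intro x
    have hx := mem_span_maps (Module.finBasis K V) x
    induction hx using Submodule.span_induction with
    | mem y hy =>
      obtain ⟨a, rfl⟩ := hy
      rw [hAvApply]
      refine Submodule.smul_mem _ _ ?_
      have hterm : ∀ σ : Equiv.Perm (Fin k),
          t σ * (PiTensorProduct.map a * t σ⁻¹) = PiTensorProduct.map (fun i => a (σ⁻¹ i)) := by
        intro σ
        rw [Module.End.mul_eq_comp, Module.End.mul_eq_comp, ← LinearMap.comp_assoc]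
        rw [← t_conj t ht σ a, LinearMap.comp_assoc]
      rw [Finset.sum_congr rfl fun σ _ => hterm σ]
      have hre : (∑ σ : Equiv.Perm (Fin k), PiTensorProduct.map (fun i => a (σ⁻¹ i)))
          = ∑ σ : Equiv.Perm (Fin k), PiTensorProduct.map (fun i => a (σ i)) := by
        refine Fintype.sum_equiv (Equiv.inv (Equiv.Perm (Fin k))) _ _ fun σ => rfl
      rw [hre]
      exact sym_mem a
    | zero => rw [map_zero]; exact Submodule.zero_mem _
    | add y z _ _ hy hz => rw [map_add]; exact Submodule.add_mem _ hy hz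
    | smul r y _ hy => rw [map_smul]; exact Submodule.smul_mem _ _ hy
  rw [← hAvh]
  exact hAvmem h



include ht in
theorem final_step {D : Type} [Fintype D] [DecidableEq D]
    (w : D → W) (hw : Submodule.span K (Set.range w) = ⊤)
    (f : W →ₗ[K] W)
    (hstar : ∀ h : W →ₗ[K] W, (∀ σ, h ∘ₗ t σ = t σ ∘ₗ h) → f ∘ₗ h = h ∘ₗ f) :
    f ∈ Submodule.span K (Set.range t) := by
  classical
  -- the representation on W
  set ρ : Representation K (Equiv.Perm (Fin k)) W :=
    { toFun := t
      map_one' := t_one t ht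
      map_mul' := fun σ τ => by
        simpa [Module.End.mul_eq_comp] using (t_mul t ht σ τ).symm } with hρ
  -- the diagonal representation on D → W
  set ρd : Representation K (Equiv.Perm (Fin k)) (D → W) :=
    { toFun := fun σ => LinearMap.pi fun j => (t σ) ∘ₗ LinearMap.proj j
      map_one' := by
        refine LinearMap.ext fun v => funext fun j => ?_
        simp [t_one t ht]
      map_mul' := fun σ τ => by
        refine LinearMap.ext fun v => funext fun j => ?_
        simp only [LinearMap.pi_apply, LinearMap.coe_comp, Function.comp_apply,
          LinearMap.proj_apply, Module.End.mul_apply]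
        rw [← t_mul t ht σ τ]
        rfl } with hρd
  haveI : NeZero ((Fintype.card (Equiv.Perm (Fin k)) : K)) := by
    refine ⟨?_⟩
    rw [Fintype.card_perm, Fintype.card_fin]
    exact_mod_cast Nat.cast_ne_zero.mpr (Nat.factorial_ne_zero k)
  set ε := ρd.asModuleEquiv with hε
  set A := MonoidAlgebra K (Equiv.Perm (Fin k)) with hA
  set w0 : ρd.asModule := ε.symm w with hw0
  set N : Submodule A ρd.asModule := Submodule.span A {w0} with hN
  obtain ⟨q, hq⟩ := MonoidAlgebra.Submodule.exists_isCompl N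
  set π : ρd.asModule →ₗ[A] ρd.asModule := N.subtype ∘ₗ N.linearProjOfIsCompl q hq with hπ
  have hπmem : ∀ x, π x ∈ N := fun x => (N.linearProjOfIsCompl q hq x).2
  have hπid : ∀ x (hx : x ∈ N), π x = x := by
    intro x hx
    exact congrArg Subtype.val (Submodule.linearProjOfIsCompl_apply_left hq ⟨x, hx⟩)
  -- φ' : transported projection, as a K-linear map
  have hsmul' : ∀ (r : K) (x : ρd.asModule), ε.symm (r • ε x) = algebraMap K A r • x := by
    intro r x
    have := ρd.asModuleEquiv_symm_map_smul r (ε x)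
    rw [← hε] at this
    rw [this, LinearEquiv.symm_apply_apply]
  set φ' : (D → W) → (D → W) := fun v => ε (π (ε.symm v)) with hφ'
  have hφadd : ∀ v v', φ' (v + v') = φ' v + φ' v' := by
    intro v v'; rw [hφ']; simp [map_add]
  have hφsmul : ∀ (r : K) (v : D → W), φ' (r • v) = r • φ' v := by
    intro r v
    rw [hφ']
    simp only
    have h1 : ε.symm (r • v) = algebraMap K A r • ε.symm v := by
      have := hsmul' r (ε.symm v)
      rwa [LinearEquiv.apply_symm_apply] at this
    rw [h1, map_smul]
    have h2 : ∀ y : ρd.asModule, ε (algebraMap K A r • y) = r • ε y := by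
      intro y
      rw [hε, ρd.asModuleEquiv_map_smul, AlgHom.commutes]
      simp [Module.algebraMap_end_apply]
    rw [h2]
  set φL : (D → W) →ₗ[K] (D → W) :=
    { toFun := φ'
      map_add' := hφadd
      map_smul' := hφsmul } with hφL
  -- φL commutes with the G-action
  have hρdof : ∀ (σ : (Equiv.Perm (Fin k))) (y : ρd.asModule), ε (MonoidAlgebra.of K (Equiv.Perm (Fin k)) σ • y) = ρd σ (ε y) := by
    intro σ y
    rw [hε, ρd.asModuleEquiv_map_smul, MonoidAlgebra.of_apply,
      Representation.asAlgebraHom_single, one_smul]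
  have hφρ : ∀ (σ : (Equiv.Perm (Fin k))) (v : D → W), φL (ρd σ v) = ρd σ (φL v) := by
    intro σ v
    show φ' (ρd σ v) = ρd σ (φ' v)
    rw [hφ']
    simp only
    have h1 : ε.symm (ρd σ v) = MonoidAlgebra.of K (Equiv.Perm (Fin k)) σ • ε.symm v := by
      have := ρd.asModuleEquiv_symm_map_rho σ (ε (ε.symm v))
      rwa [LinearEquiv.apply_symm_apply] at this
    rw [h1, map_smul, hρdof]
  -- matrix components of φL
  set hh : D → D → (W →ₗ[K] W) := fun i j =>
    LinearMap.proj i ∘ₗ φL ∘ₗ LinearMap.single K (fun _ : D => W) j with hhh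
  have hsingle : ∀ (σ : (Equiv.Perm (Fin k))) (j : D) (v : W),
      Pi.single (M := fun _ : D => W) j (t σ v) = ρd σ (Pi.single j v) := by
    intro σ j v
    funext l
    have hz : ρd σ (Pi.single (M := fun _ : D => W) j v) l
        = t σ (Pi.single (M := fun _ : D => W) j v l) := rfl
    rw [hz]
    by_cases h : l = j
    · subst h; rw [Pi.single_eq_same, Pi.single_eq_same]
    · rw [Pi.single_eq_of_ne h, Pi.single_eq_of_ne h, map_zero]
  have hequiv : ∀ i j σ, (hh i j) ∘ₗ t σ = t σ ∘ₗ (hh i j) := by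
    intro i j σ
    refine LinearMap.ext fun v => ?_
    simp only [hhh, LinearMap.comp_apply, LinearMap.proj_apply, LinearMap.coe_single]
    rw [hsingle σ j v, hφρ]
    rfl
  have hdecomp : ∀ (v : D → W) (i : D), φL v i = ∑ j, hh i j (v j) := by
    intro v i
    have h1 : v = ∑ j, Pi.single j (v j) := (Finset.univ_sum_single v).symm
    conv_lhs => rw [h1]
    rw [map_sum]
    rw [Finset.sum_apply]
    rfl
  -- the diagonal action of f commutes with φL
  have hFφ : ∀ v : D → W, (fun J => f (φL v J)) = φL (fun J => f (v J)) := by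
    intro v
    funext i
    rw [hdecomp, map_sum, hdecomp]
    refine Finset.sum_congr rfl fun j _ => ?_
    have := hstar (hh i j) (hequiv i j)
    exact LinearMap.congr_fun this (v j)
  -- conclude : the image of w under diagonal f lies in N
  have hπw0 : π w0 = w0 := hπid w0 (Submodule.mem_span_singleton_self w0)
  have hφw : φ' w = w := by
    show ε (π (ε.symm w)) = w
    calc ε (π (ε.symm w)) = ε w0 := by rw [show ε.symm w = w0 from rfl, hπw0]
      _ = w := by rw [hw0, LinearEquiv.apply_symm_apply]
  have hfixed : (fun J => f (w J)) = φ' (fun J => f (w J)) := by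
    have h1 : (fun J => f (w J)) = fun J => f (φL w J) := by
      funext J
      show f (w J) = f (φ' w J)
      rw [hφw]
    conv_lhs => rw [h1, hFφ w]
    rfl
  have hmem : ε.symm (fun J => f (w J)) ∈ N := by
    have h2 : ε.symm (fun J => f (w J)) = π (ε.symm (fun J => f (w J))) := by
      conv_lhs => rw [hfixed]
      rw [hφ']
      simp only
      rw [LinearEquiv.symm_apply_apply]
    rw [h2]
    exact hπmem _
  rw [hN] at hmem
  obtain ⟨x, hx⟩ := Submodule.mem_span_singleton.mp hmem
  -- unfold the action of x
  have hxw : ∀ J, f (w J) = ∑ σ ∈ x.coeff.support, x.coeff σ • t σ (w J) := by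
    intro J
    have h1 : ε (x • w0) = ρd.asAlgebraHom x (ε w0) := ρd.asModuleEquiv_map_smul x w0
    rw [hx] at h1
    rw [LinearEquiv.apply_symm_apply] at h1
    have h2 : ε w0 = w := by rw [hw0, LinearEquiv.apply_symm_apply]
    rw [h2] at h1
    have h3 : ρd.asAlgebraHom x = ∑ σ ∈ x.coeff.support, x.coeff σ • ρd σ := by
      conv_lhs => rw [← MonoidAlgebra.sum_coeff_single x]
      rw [Finsupp.sum, map_sum]
      refine Finset.sum_congr rfl fun σ _ => ?_
      rw [Representation.asAlgebraHom_single]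
    have h4 := congrFun (congrArg (fun (z : D → W) => z) h1) J
    rw [h3] at h4
    have h5 : (∑ σ ∈ x.coeff.support, x.coeff σ • ρd σ) w J
        = ∑ σ ∈ x.coeff.support, x.coeff σ • t σ (w J) := by
      rw [LinearMap.sum_apply, Finset.sum_apply]
      refine Finset.sum_congr rfl fun σ _ => ?_
      simp [hρd]
    rw [h4]
    exact h5
  have hfe : f = ∑ σ ∈ x.coeff.support, x.coeff σ • t σ := by
    refine LinearMap.ext_on hw ?_
    rintro y ⟨J, rfl⟩
    rw [LinearMap.sum_apply, hxw J]
    rfl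
  rw [hfe]
  exact Submodule.sum_mem _ fun σ _ =>
    Submodule.smul_mem _ _ (Submodule.subset_span ⟨σ, rfl⟩)



end Interp

end SchurWeylAux

/-- The space of `GL(V)`-equivariant linear endomorphisms of `V^{⊗k}`
is spanned by the elementary invariant tensors `t_σ`, `σ ∈ Σ_k`. -/
theorem equivariant_mem_span_elementary
    {K : Type} [Field K] [CharZero K]
    {V : Type} [AddCommGroup V] [Module K V] [FiniteDimensional K V]
    (k : ℕ)
    (t : Equiv.Perm (Fin k) → (⨂[K] (_ : Fin k), V) →ₗ[K] ⨂[K] (_ : Fin k), V)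
    (ht : ∀ σ (v : Fin k → V), t σ (tprod K v) = tprod K fun i => v (σ⁻¹ i))
    (f : (⨂[K] (_ : Fin k), V) →ₗ[K] ⨂[K] (_ : Fin k), V)
    (hf : ∀ g : V ≃ₗ[K] V,
      f ∘ₗ PiTensorProduct.map (fun _ : Fin k => g.toLinearMap) =
        PiTensorProduct.map (fun _ : Fin k => g.toLinearMap) ∘ₗ f) :
    f ∈ Submodule.span K (Set.range t) := by
  classical
  set e := Module.finBasis K V with he
  have hstar : ∀ h : (⨂[K] (_ : Fin k), V) →ₗ[K] ⨂[K] (_ : Fin k), V,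
      (∀ σ, h ∘ₗ t σ = t σ ∘ₗ h) → f ∘ₗ h = h ∘ₗ f := by
    intro h hcomm
    have hmem := equivariant_mem_const_span t ht h hcomm
    set Cmt : ((⨂[K] (_ : Fin k), V) →ₗ[K] ⨂[K] (_ : Fin k), V) →ₗ[K]
        ((⨂[K] (_ : Fin k), V) →ₗ[K] ⨂[K] (_ : Fin k), V) :=
      LinearMap.llcomp K _ _ _ f - LinearMap.lcomp K _ f with hCmt
    have hCmtApply : ∀ x, Cmt x = f ∘ₗ x - x ∘ₗ f := fun x => rfl
    have hzero : ∀ x ∈ Submodule.span K (Set.range fun c : V →ₗ[K] V =>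
        (PiTensorProduct.map (fun _ : Fin k => c) :
          (⨂[K] (_ : Fin k), V) →ₗ[K] ⨂[K] (_ : Fin k), V)), Cmt x = 0 := by
      intro x hx
      induction hx using Submodule.span_induction with
      | mem y hy =>
        obtain ⟨c, rfl⟩ := hy
        rw [hCmtApply, sub_eq_zero]
        exact comm_const f hf c
      | zero => rw [map_zero]
      | add y z _ _ hy hz => rw [map_add, hy, hz, add_zero]
      | smul r y _ hy => rw [map_smul, hy, smul_zero]
    have hz0 := hzero h hmem
    rw [hCmtApply] at hz0
    exact sub_eq_zero.mp hz0
  exact final_step t ht (BB e) (span_BB e) f hstar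
end

section
/- If dim(V) ≥ 3, then the space of GL(V)-equivariant linear maps Lin(V^{⊗2} ⊗ Sym(V^{⊗2}, V), V), where Sym(V^{⊗2},V) denotes symmetric bilinear maps, is 3-dimensional, spanned by X⊗Y⊗F ↦ F(X,Y), X⊗Y⊗F ↦ Y·Tr(F(X,−)), and X⊗Y⊗F ↦ X·Tr(F(Y,−)). -/
open TensorProduct

section

set_option linter.unusedSectionVars false

variable (K : Type) [Field K] [CharZero K]
variable (V : Type) [AddCommGroup V] [Module K V] [FiniteDimensional K V]

/-- The subspace `Sym(V^{⊗2}, V)` of symmetric bilinear maps `F : V ⊗ V → V`,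
i.e. those with `F(v' ⊗ v'') = F(v'' ⊗ v')`. -/
def symBil : Submodule K ((V ⊗[K] V) →ₗ[K] V) where
  carrier := {F | ∀ v w : V, F (v ⊗ₜ[K] w) = F (w ⊗ₜ[K] v)}
  add_mem' := by
    intro a b ha hb v w
    simp [ha v w, hb v w]
  zero_mem' := by intro v w; simp
  smul_mem' := by
    intro c F hF v w
    simp [hF v w]

variable {K V}

/-- The induced action of `g ∈ GL(V)` on bilinear maps: `F ↦ g ∘ F ∘ (g⁻¹ ⊗ g⁻¹)`. -/
noncomputable def glBil (g : V ≃ₗ[K] V) :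
    ((V ⊗[K] V) →ₗ[K] V) →ₗ[K] ((V ⊗[K] V) →ₗ[K] V) :=
  (LinearMap.llcomp K (V ⊗[K] V) V V g.toLinearMap) ∘ₗ
    (LinearMap.lcomp K V (TensorProduct.map g.symm.toLinearMap g.symm.toLinearMap))

lemma glBil_mem_symBil (g : V ≃ₗ[K] V) (F : (V ⊗[K] V) →ₗ[K] V)
    (hF : F ∈ symBil K V) : glBil g F ∈ symBil K V := by
  intro v w
  simp only [glBil, LinearMap.comp_apply, LinearMap.llcomp_apply,
    LinearMap.lcomp_apply, TensorProduct.map_tmul]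
  rw [hF]

/-- The action of `g ∈ GL(V)` restricted to symmetric bilinear maps. -/
noncomputable def glSymBil (g : V ≃ₗ[K] V) : symBil K V →ₗ[K] symBil K V :=
  (glBil g).restrict (fun F hF => glBil_mem_symBil g F hF)
section Aux

variable {ι : Type} [Fintype ι] [DecidableEq ι]

lemma coord_basis (e : Module.Basis ι K V) (i a : ι) :
    e.coord i (e a) = if a = i then (1:K) else 0 := by
  simp [Module.Basis.coord_apply, Module.Basis.repr_self, Finsupp.single_apply]

/-- basis-type symmetric bilinear maps -/
noncomputable def Fb (e : Module.Basis ι K V) (i j k : ι) : (V ⊗[K] V) →ₗ[K] V :=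
  TensorProduct.lift <| LinearMap.mk₂ K
    (fun v w => (e.coord i v * e.coord j w + e.coord j v * e.coord i w) • e k)
    (by intro m₁ m₂ n; simp only [map_add]; module)
    (by intro c m n; simp only [map_smul, smul_eq_mul]; module)
    (by intro m n₁ n₂; simp only [map_add]; module)
    (by intro c m n; simp only [map_smul, smul_eq_mul]; module)

lemma Fb_apply (e : Module.Basis ι K V) (i j k : ι) (v w : V) :
    Fb e i j k (v ⊗ₜ[K] w)
      = (e.coord i v * e.coord j w + e.coord j v * e.coord i w) • e k := by
  simp [Fb]

lemma Fb_mem (e : Module.Basis ι K V) (i j k : ι) : Fb e i j k ∈ symBil K V := by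
  intro v w
  simp only [Fb_apply]
  module

noncomputable def Fs (e : Module.Basis ι K V) (i j k : ι) : symBil K V :=
  ⟨Fb e i j k, Fb_mem e i j k⟩

lemma Fb_symm (e : Module.Basis ι K V) (i j k : ι) : Fb e i j k = Fb e j i k := by
  apply TensorProduct.ext'
  intro v w
  simp only [Fb_apply]
  module

lemma Fb_basis (e : Module.Basis ι K V) (i j k a b : ι) :
    Fb e i j k (e a ⊗ₜ[K] e b)
      = ((if a = i then (1:K) else 0) * (if b = j then (1:K) else 0)
          + (if a = j then (1:K) else 0) * (if b = i then (1:K) else 0)) • e k := by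
  rw [Fb_apply, coord_basis, coord_basis, coord_basis, coord_basis]

/-- diagonal automorphism -/
noncomputable def diagE (e : Module.Basis ι K V) (c : ι → Kˣ) : V ≃ₗ[K] V :=
  LinearEquiv.ofLinear (e.constr K fun i => (c i : K) • e i)
    (e.constr K fun i => ((c i)⁻¹ : Kˣ) • e i)
    (by apply e.ext; intro i
        simp [Module.Basis.constr_basis, smul_smul, Units.smul_def])
    (by apply e.ext; intro i
        simp [Module.Basis.constr_basis, smul_smul, Units.smul_def])

lemma diagE_apply (e : Module.Basis ι K V) (c : ι → Kˣ) (a : ι) :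
    diagE e c (e a) = (c a : K) • e a := by
  simp [diagE, Module.Basis.constr_basis]

lemma diagE_symm_apply (e : Module.Basis ι K V) (c : ι → Kˣ) (a : ι) :
    (diagE e c).symm (e a) = (((c a)⁻¹ : Kˣ) : K) • e a := by
  simp [diagE, Module.Basis.constr_basis, Units.smul_def]

lemma repr_diagE (e : Module.Basis ι K V) (c : ι → Kˣ) (v : V) (m : ι) :
    e.repr (diagE e c v) m = (c m : K) * e.repr v m := by
  have h : (Finsupp.lapply m) ∘ₗ (e.repr : V →ₗ[K] (ι →₀ K)) ∘ₗ (diagE e c).toLinearMap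
      = (c m : K) • ((Finsupp.lapply m) ∘ₗ (e.repr : V →ₗ[K] (ι →₀ K))) := by
    apply e.ext; intro r
    by_cases hr : r = m
    · subst hr
      simp [diagE_apply, Module.Basis.repr_self, Finsupp.single_apply]
    · simp [diagE_apply, Module.Basis.repr_self, Finsupp.single_apply, hr]
  simpa using LinearMap.congr_fun h v

lemma repr_perm (e : Module.Basis ι K V) (σ : Equiv.Perm ι) (v : V) (m : ι) :
    e.repr (e.equiv e σ v) (σ m) = e.repr v m := by
  have h : (Finsupp.lapply (σ m)) ∘ₗ (e.repr : V →ₗ[K] (ι →₀ K)) ∘ₗ (e.equiv e σ).toLinearMap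
      = (Finsupp.lapply m) ∘ₗ (e.repr : V →ₗ[K] (ι →₀ K)) := by
    apply e.ext; intro r
    by_cases hr : r = m
    · subst hr; simp [Module.Basis.equiv_apply, Module.Basis.repr_self, Finsupp.single_apply]
    · simp [Module.Basis.equiv_apply, Module.Basis.repr_self, Finsupp.single_apply, hr,
        σ.injective.ne hr]
  simpa using LinearMap.congr_fun h v

/-- rank one map `v ↦ (coord q v) • e p` -/
noncomputable def rk1 (e : Module.Basis ι K V) (q p : ι) : V →ₗ[K] V :=
  (e.coord q).smulRight (e p)

noncomputable def unipE (e : Module.Basis ι K V) (p q : ι) (h : p ≠ q) (s : K) : V ≃ₗ[K] V :=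
  LinearEquiv.ofLinear (LinearMap.id + s • rk1 e q p) (LinearMap.id - s • rk1 e q p)
    (by apply LinearMap.ext; intro v
        have hq : e.coord q (e p) = 0 := by rw [coord_basis]; simp [h]
        simp [rk1, map_sub, map_smul, hq, smul_smul, sub_smul, Module.Basis.coord_apply,
          Module.Basis.repr_self, Finsupp.single_apply, h])
    (by apply LinearMap.ext; intro v
        have hq : e.coord q (e p) = 0 := by rw [coord_basis]; simp [h]
        simp [rk1, map_sub, map_smul, hq, smul_smul, sub_smul, Module.Basis.coord_apply,
          Module.Basis.repr_self, Finsupp.single_apply, h])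

lemma unipE_apply (e : Module.Basis ι K V) (p q : ι) (h : p ≠ q) (s : K) (v : V) :
    unipE e p q h s v = v + (s * e.coord q v) • e p := by
  simp [unipE, rk1, smul_smul]

lemma unipE_symm_apply (e : Module.Basis ι K V) (p q : ι) (h : p ≠ q) (s : K) (v : V) :
    (unipE e p q h s).symm v = v - (s * e.coord q v) • e p := by
  simp [unipE, rk1, smul_smul]

end Aux
section Aux2

/-- the evaluation map -/
noncomputable def m0 : ((V ⊗[K] V) ⊗[K] (symBil K V)) →ₗ[K] V :=
  TensorProduct.lift ((Submodule.subtype (symBil K V)).flip)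

lemma m0_tmul (u : V ⊗[K] V) (F : symBil K V) :
    m0 (u ⊗ₜ[K] F) = (F : (V ⊗[K] V) →ₗ[K] V) u := by
  simp [m0]

noncomputable def trF : symBil K V →ₗ[K] (V →ₗ[K] K) :=
  (LinearMap.llcomp K V (V →ₗ[K] V) K (LinearMap.trace K V)) ∘ₗ
    (TensorProduct.lcurry (RingHom.id K) V V V) ∘ₗ (Submodule.subtype (symBil K V))

lemma trF_apply (F : symBil K V) (x : V) :
    trF F x = LinearMap.trace K V
      (TensorProduct.lcurry (RingHom.id K) V V V (F : (V ⊗[K] V) →ₗ[K] V) x) := by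
  simp [trF]

noncomputable def m1 : ((V ⊗[K] V) ⊗[K] (symBil K V)) →ₗ[K] V :=
  TensorProduct.lift (TensorProduct.lift (LinearMap.mk₂ K
    (fun x y => ((trF (K := K) (V := V)).flip x).smulRight y)
    (by intro x x' y; apply LinearMap.ext; intro F; simp [add_smul])
    (by intro c x y; apply LinearMap.ext; intro F; simp [smul_smul])
    (by intro x y y'; apply LinearMap.ext; intro F; simp [smul_add])
    (by intro c x y; apply LinearMap.ext; intro F
        simp [smul_smul, mul_comm])))

lemma m1_tmul (x y : V) (F : symBil K V) :
    m1 ((x ⊗ₜ[K] y) ⊗ₜ[K] F) = (LinearMap.trace K V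
      (TensorProduct.lcurry (RingHom.id K) V V V (F : (V ⊗[K] V) →ₗ[K] V) x)) • y := by
  simp [m1, trF]

noncomputable def m2 : ((V ⊗[K] V) ⊗[K] (symBil K V)) →ₗ[K] V :=
  m1 ∘ₗ (TensorProduct.map (TensorProduct.comm K V V).toLinearMap LinearMap.id)

lemma m2_tmul (x y : V) (F : symBil K V) :
    m2 ((x ⊗ₜ[K] y) ⊗ₜ[K] F) = (LinearMap.trace K V
      (TensorProduct.lcurry (RingHom.id K) V V V (F : (V ⊗[K] V) →ₗ[K] V) y)) • x := by
  simp [m2, m1_tmul]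

/-- equivariance property -/
def EqvMap (f : ((V ⊗[K] V) ⊗[K] (symBil K V)) →ₗ[K] V) : Prop :=
  ∀ g : V ≃ₗ[K] V,
    f ∘ₗ TensorProduct.map
        (TensorProduct.map g.toLinearMap g.toLinearMap) (glSymBil g) =
      g.toLinearMap ∘ₗ f

lemma glSymBil_coe (g : V ≃ₗ[K] V) (F : symBil K V) :
    ((glSymBil g F : symBil K V) : (V ⊗[K] V) →ₗ[K] V)
      = g.toLinearMap ∘ₗ (F : (V ⊗[K] V) →ₗ[K] V) ∘ₗ
          TensorProduct.map g.symm.toLinearMap g.symm.toLinearMap := rfl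

lemma glSymBil_apply_tmul (g : V ≃ₗ[K] V) (F : symBil K V) (v w : V) :
    ((glSymBil g F : symBil K V) : (V ⊗[K] V) →ₗ[K] V) (v ⊗ₜ[K] w)
      = g ((F : (V ⊗[K] V) →ₗ[K] V) (g.symm v ⊗ₜ[K] g.symm w)) := by
  rw [glSymBil_coe]; simp

lemma m0_equiv : EqvMap (m0 (K := K) (V := V)) := by
  intro g
  apply TensorProduct.ext_threefold
  intro x y F
  simp [m0_tmul, glSymBil_apply_tmul]

lemma lcurry_glSymBil (g : V ≃ₗ[K] V) (F : symBil K V) (x : V) :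
    TensorProduct.lcurry (RingHom.id K) V V V
        ((glSymBil g F : symBil K V) : (V ⊗[K] V) →ₗ[K] V) (g x)
      = g.conj (TensorProduct.lcurry (RingHom.id K) V V V (F : (V ⊗[K] V) →ₗ[K] V) x) := by
  apply LinearMap.ext; intro v
  simp [glSymBil_apply_tmul, LinearEquiv.conj_apply]

lemma m1_equiv : EqvMap (m1 (K := K) (V := V)) := by
  intro g
  apply TensorProduct.ext_threefold
  intro x y F
  simp only [LinearMap.comp_apply, TensorProduct.map_tmul, m1_tmul,
    LinearEquiv.coe_coe, lcurry_glSymBil, LinearMap.trace_conj', map_smul]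

lemma braid_comm (g : V ≃ₗ[K] V) :
    (TensorProduct.map (TensorProduct.comm K V V).toLinearMap
        (LinearMap.id (M := symBil K V))) ∘ₗ
      TensorProduct.map
        (TensorProduct.map g.toLinearMap g.toLinearMap) (glSymBil g)
    = TensorProduct.map
        (TensorProduct.map g.toLinearMap g.toLinearMap) (glSymBil g) ∘ₗ
      (TensorProduct.map (TensorProduct.comm K V V).toLinearMap LinearMap.id) := by
  apply TensorProduct.ext_threefold
  intro x y F
  simp

lemma m2_equiv : EqvMap (m2 (K := K) (V := V)) := by
  intro g
  have h1 := m1_equiv (K := K) (V := V) g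
  calc m2 ∘ₗ TensorProduct.map
        (TensorProduct.map g.toLinearMap g.toLinearMap) (glSymBil g)
      = m1 ∘ₗ ((TensorProduct.map (TensorProduct.comm K V V).toLinearMap
          LinearMap.id) ∘ₗ TensorProduct.map
          (TensorProduct.map g.toLinearMap g.toLinearMap) (glSymBil g)) := by
        rw [m2, LinearMap.comp_assoc]
    _ = (m1 ∘ₗ TensorProduct.map
          (TensorProduct.map g.toLinearMap g.toLinearMap) (glSymBil g)) ∘ₗ
          (TensorProduct.map (TensorProduct.comm K V V).toLinearMap
            LinearMap.id) := by rw [braid_comm, LinearMap.comp_assoc]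
    _ = g.toLinearMap ∘ₗ m2 := by rw [h1, m2, LinearMap.comp_assoc]

lemma trace_smulRight' (φ : V →ₗ[K] K) (u : V) :
    LinearMap.trace K V (φ.smulRight u) = φ u := by
  have h : φ.smulRight u = dualTensorHom K V V (φ ⊗ₜ[K] u) := by
    ext v; simp
  rw [h, LinearMap.trace_eq_contract_apply, contractLeft_apply]

end Aux2

section Aux3

variable {ι : Type} [Fintype ι] [DecidableEq ι]

lemma lcurry_Fb (e : Module.Basis ι K V) (i j k : ι) (x : V) :
    TensorProduct.lcurry (RingHom.id K) V V V (Fb e i j k) x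
      = (e.coord i x) • (e.coord j).smulRight (e k)
        + (e.coord j x) • (e.coord i).smulRight (e k) := by
  apply LinearMap.ext; intro v
  simp only [TensorProduct.lcurry_apply, Fb_apply, LinearMap.add_apply,
    LinearMap.smul_apply, LinearMap.smulRight_apply]
  module

lemma trace_lcurry_Fb (e : Module.Basis ι K V) (i j k : ι) (x : V) :
    LinearMap.trace K V (TensorProduct.lcurry (RingHom.id K) V V V (Fb e i j k) x)
      = e.coord i x * (if k = j then (1:K) else 0)
        + e.coord j x * (if k = i then (1:K) else 0) := by
  rw [lcurry_Fb]
  simp only [map_add, map_smul, trace_smulRight', smul_eq_mul, coord_basis]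

lemma glBil_apply_tmul (g : V ≃ₗ[K] V) (F : (V ⊗[K] V) →ₗ[K] V) (v w : V) :
    glBil g F (v ⊗ₜ[K] w) = g (F (g.symm v ⊗ₜ[K] g.symm w)) := by
  simp [glBil]

lemma coord_diagE_symm (e : Module.Basis ι K V) (c : ι → Kˣ) (i : ι) (v : V) :
    e.coord i ((diagE e c).symm v) = (((c i)⁻¹ : Kˣ) : K) * e.coord i v := by
  have h := repr_diagE e c ((diagE e c).symm v) i
  rw [LinearEquiv.apply_symm_apply] at h
  simp only [Module.Basis.coord_apply, h, ← mul_assoc, Units.inv_mul, one_mul]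

lemma coord_perm_symm (e : Module.Basis ι K V) (σ : Equiv.Perm ι) (i : ι) (v : V) :
    e.coord i ((e.equiv e σ).symm v) = e.coord (σ i) v := by
  have h := repr_perm e σ ((e.equiv e σ).symm v) i
  rw [LinearEquiv.apply_symm_apply] at h
  simp only [Module.Basis.coord_apply, h]

lemma glBil_diag (e : Module.Basis ι K V) (c : ι → Kˣ) (i j k : ι) :
    glBil (diagE e c) (Fb e i j k)
      = ((c k : K) * ((((c i)⁻¹ : Kˣ) : K) * (((c j)⁻¹ : Kˣ) : K))) • Fb e i j k := by
  apply TensorProduct.ext'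
  intro v w
  rw [LinearMap.smul_apply, glBil_apply_tmul, Fb_apply, Fb_apply]
  simp only [coord_diagE_symm, map_smul, diagE_apply]
  module

lemma glBil_perm (e : Module.Basis ι K V) (σ : Equiv.Perm ι) (i j k : ι) :
    glBil (e.equiv e σ) (Fb e i j k) = Fb e (σ i) (σ j) (σ k) := by
  apply TensorProduct.ext'
  intro v w
  rw [glBil_apply_tmul, Fb_apply, Fb_apply]
  simp only [coord_perm_symm, map_smul, Module.Basis.equiv_apply]

lemma glBil_unip (e : Module.Basis ι K V) (p q : ι) (hpq : p ≠ q) (s : K) (i j k : ι) :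
    glBil (unipE e p q hpq s) (Fb e i j k)
      = Fb e i j k
        + s • ((if k = q then (1:K) else 0) • Fb e i j p
             - (if p = i then (1:K) else 0) • Fb e q j k
             - (if p = j then (1:K) else 0) • Fb e i q k)
        + (s*s) • (((if p = i then (1:K) else 0) * (if p = j then (1:K) else 0)) • Fb e q q k
             - ((if k = q then (1:K) else 0) * (if p = i then (1:K) else 0)) • Fb e q j p
             - ((if k = q then (1:K) else 0) * (if p = j then (1:K) else 0)) • Fb e i q p)
        + (s*s*s) • (((if k = q then (1:K) else 0) * (if p = i then (1:K) else 0)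
              * (if p = j then (1:K) else 0)) • Fb e q q p) := by
  apply TensorProduct.ext'
  intro v w
  simp only [glBil_apply_tmul, unipE_symm_apply, Fb_apply, map_sub, map_smul,
    map_add, coord_basis, unipE_apply, LinearMap.add_apply, LinearMap.sub_apply,
    LinearMap.smul_apply, smul_eq_mul]
  module

end Aux3
section Aux4

variable {ι : Type} [Fintype ι] [DecidableEq ι]

lemma eqv_apply {f : ((V ⊗[K] V) ⊗[K] (symBil K V)) →ₗ[K] V} (hf : EqvMap f)
    (g : V ≃ₗ[K] V) (x y : V) (F : symBil K V) :
    f ((g x ⊗ₜ[K] g y) ⊗ₜ[K] glSymBil g F) = g (f ((x ⊗ₜ[K] y) ⊗ₜ[K] F)) := by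
  have h := LinearMap.congr_fun (hf g) ((x ⊗ₜ[K] y) ⊗ₜ[K] F)
  simpa using h

lemma Fs_symm (e : Module.Basis ι K V) (i j k : ι) : Fs e i j k = Fs e j i k :=
  Subtype.ext (Fb_symm e i j k)

lemma glSymBil_diag_Fs (e : Module.Basis ι K V) (c : ι → Kˣ) (i j k : ι) :
    glSymBil (diagE e c) (Fs e i j k)
      = ((c k : K) * ((((c i)⁻¹ : Kˣ) : K) * (((c j)⁻¹ : Kˣ) : K))) • Fs e i j k := by
  apply Subtype.ext
  rw [SetLike.val_smul]
  exact glBil_diag e c i j k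

lemma glSymBil_perm_Fs (e : Module.Basis ι K V) (σ : Equiv.Perm ι) (i j k : ι) :
    glSymBil (e.equiv e σ) (Fs e i j k) = Fs e (σ i) (σ j) (σ k) := by
  apply Subtype.ext
  exact glBil_perm e σ i j k

lemma glSymBil_unip_Fs (e : Module.Basis ι K V) (p q : ι) (hpq : p ≠ q) (s : K) (i j k : ι) :
    glSymBil (unipE e p q hpq s) (Fs e i j k)
      = Fs e i j k
        + s • ((if k = q then (1:K) else 0) • Fs e i j p
             - (if p = i then (1:K) else 0) • Fs e q j k
             - (if p = j then (1:K) else 0) • Fs e i q k)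
        + (s*s) • (((if p = i then (1:K) else 0) * (if p = j then (1:K) else 0)) • Fs e q q k
             - ((if k = q then (1:K) else 0) * (if p = i then (1:K) else 0)) • Fs e q j p
             - ((if k = q then (1:K) else 0) * (if p = j then (1:K) else 0)) • Fs e i q p)
        + (s*s*s) • (((if k = q then (1:K) else 0) * (if p = i then (1:K) else 0)
              * (if p = j then (1:K) else 0)) • Fs e q q p) := by
  apply Subtype.ext
  push_cast [Submodule.coe_add, SetLike.val_smul, Submodule.coe_sub]
  exact glBil_unip e p q hpq s i j k

/-- basis vectors of the big tensor product -/
noncomputable def Bv (e : Module.Basis ι K V) (a b i j k : ι) :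
    (V ⊗[K] V) ⊗[K] (symBil K V) :=
  (e a ⊗ₜ[K] e b) ⊗ₜ[K] Fs e i j k

/-- coefficients of `f` in the standard basis -/
noncomputable def Tc (e : Module.Basis ι K V)
    (f : ((V ⊗[K] V) ⊗[K] (symBil K V)) →ₗ[K] V) (a b i j k m : ι) : K :=
  e.repr (f (Bv e a b i j k)) m

lemma Tc_symm (e : Module.Basis ι K V) (f : ((V ⊗[K] V) ⊗[K] (symBil K V)) →ₗ[K] V)
    (a b i j k m : ι) : Tc e f a b i j k m = Tc e f a b j i k m := by
  unfold Tc Bv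
  rw [Fs_symm]

/-- relation from the diagonal torus -/
lemma diag_rel (e : Module.Basis ι K V) {f : ((V ⊗[K] V) ⊗[K] (symBil K V)) →ₗ[K] V}
    (hf : EqvMap f) (c : ι → Kˣ) (a b i j k m : ι) :
    (c a : K) * (c b : K) * (c k : K) * Tc e f a b i j k m
      = (c i : K) * (c j : K) * (c m : K) * Tc e f a b i j k m := by
  have h := eqv_apply hf (diagE e c) (e a) (e b) (Fs e i j k)
  rw [glSymBil_diag_Fs, diagE_apply, diagE_apply] at h
  simp only [TensorProduct.tmul_smul, TensorProduct.smul_tmul', map_smul,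
    smul_smul] at h
  rw [← TensorProduct.smul_tmul', ← TensorProduct.smul_tmul', map_smul] at h
  have h2 := congrArg (fun v => e.repr v m) h
  simp only [map_smul, Finsupp.smul_apply, smul_eq_mul, repr_diagE] at h2
  have ht : Tc e f a b i j k m
      = e.repr (f ((e a ⊗ₜ[K] e b) ⊗ₜ[K] Fs e i j k)) m := rfl
  rw [ht]
  have hi : (c i : K) ≠ 0 := Units.ne_zero _
  have hj : (c j : K) ≠ 0 := Units.ne_zero _
  field_simp at h2
  have hi' := Units.mul_inv (c i)
  have hj' := Units.mul_inv (c j)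
  linear_combination (↑(c i) * ↑(c j) : K) * h2
    - (↑(c a) * ↑(c b) * ↑(c k) * e.repr (f ((e a ⊗ₜ[K] e b) ⊗ₜ[K] Fs e i j k)) m) * hi'
    - (↑(c a) * ↑(c b) * ↑(c k) * e.repr (f ((e a ⊗ₜ[K] e b) ⊗ₜ[K] Fs e i j k)) m
        * (↑(c i) * ↑((c i)⁻¹))) * hj'

/-- relation from permutations -/
lemma perm_rel (e : Module.Basis ι K V) {f : ((V ⊗[K] V) ⊗[K] (symBil K V)) →ₗ[K] V}
    (hf : EqvMap f) (σ : Equiv.Perm ι) (a b i j k m : ι) :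
    Tc e f (σ a) (σ b) (σ i) (σ j) (σ k) (σ m) = Tc e f a b i j k m := by
  have h := eqv_apply hf (e.equiv e σ) (e a) (e b) (Fs e i j k)
  rw [glSymBil_perm_Fs, Module.Basis.equiv_apply, Module.Basis.equiv_apply] at h
  have h2 := congrArg (fun v => e.repr v (σ m)) h
  have ht1 : Tc e f (σ a) (σ b) (σ i) (σ j) (σ k) (σ m)
      = e.repr (f ((e (σ a) ⊗ₜ[K] e (σ b)) ⊗ₜ[K] Fs e (σ i) (σ j) (σ k))) (σ m) := rfl
  have ht2 : Tc e f a b i j k m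
      = e.repr (f ((e a ⊗ₜ[K] e b) ⊗ₜ[K] Fs e i j k)) m := rfl
  rw [ht1, ht2, h2, repr_perm]

/-- extraction of the linear coefficient of a vector-valued polynomial identity -/
lemma coeff_one_of_poly (w0 w1 w2 w3 w4 w5 : V)
    (h : ∀ s : K, w0 + s • w1 + (s*s) • w2 + (s*s*s) • w3
        + (s*s*s*s) • w4 + (s*s*s*s*s) • w5 = 0) :
    w1 = 0 := by
  rw [← Module.forall_dual_apply_eq_zero_iff K]
  intro φ
  set p : Polynomial K := Polynomial.C (φ w0) + Polynomial.C (φ w1) * Polynomial.X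
    + Polynomial.C (φ w2) * Polynomial.X^2 + Polynomial.C (φ w3) * Polynomial.X^3
    + Polynomial.C (φ w4) * Polynomial.X^4 + Polynomial.C (φ w5) * Polynomial.X^5 with hp
  have hev : ∀ s : K, p.eval s = 0 := by
    intro s
    have h2 := congrArg φ (h s)
    simp only [map_add, map_smul, map_zero, smul_eq_mul] at h2
    simp only [hp, Polynomial.eval_add, Polynomial.eval_mul, Polynomial.eval_C,
      Polynomial.eval_X, Polynomial.eval_pow]
    linear_combination h2
  have hz : p = 0 := Polynomial.funext (by simp [hev])
  have hc := congrArg (fun r => Polynomial.coeff r 1) hz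
  simp only [hp, Polynomial.coeff_add, Polynomial.coeff_C_mul, Polynomial.coeff_X_pow,
    Polynomial.coeff_C, Polynomial.coeff_zero, Polynomial.coeff_C_mul,
    Polynomial.coeff_X, Polynomial.coeff_one] at hc
  simpa using hc

end Aux4
section Aux5

variable {ι : Type} [Fintype ι] [DecidableEq ι]

/-- weight constraint : nonvanishing coefficients satisfy multiset balance -/
lemma weight_rel (e : Module.Basis ι K V) {f : ((V ⊗[K] V) ⊗[K] (symBil K V)) →ₗ[K] V}
    (hf : EqvMap f) (a b i j k m : ι) (hT : Tc e f a b i j k m ≠ 0) (q : ι) :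
    ((if a = q then 1 else 0) + (if b = q then 1 else 0) + (if k = q then 1 else 0) : ℕ)
      = (if i = q then 1 else 0) + (if j = q then 1 else 0) + (if m = q then 1 else 0) := by
  set u : Kˣ := Units.mk0 (2:K) two_ne_zero with hu
  have h := diag_rel e hf (fun r => if r = q then u else 1) a b i j k m
  have hval : ∀ r : ι, ((if r = q then u else 1 : Kˣ) : K)
      = (2:K) ^ (if r = q then 1 else 0 : ℕ) := by
    intro r; split_ifs <;> simp [hu]
  rw [hval a, hval b, hval k, hval i, hval j, hval m,
    ← pow_add, ← pow_add, ← pow_add, ← pow_add] at h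
  have h2 := mul_right_cancel₀ hT h
  have h3 : ((2 ^ ((if a = q then 1 else 0) + (if b = q then 1 else 0)
      + (if k = q then 1 else 0)) : ℕ) : K)
      = ((2 ^ ((if i = q then 1 else 0) + (if j = q then 1 else 0)
      + (if m = q then 1 else 0)) : ℕ) : K) := by
    push_cast
    exact h2
  have h4 : (2:ℕ) ^ ((if a = q then 1 else 0) + (if b = q then 1 else 0)
      + (if k = q then 1 else 0))
      = 2 ^ ((if i = q then 1 else 0) + (if j = q then 1 else 0)
      + (if m = q then 1 else 0)) := Nat.cast_injective h3
  exact Nat.pow_right_injective (le_refl 2) h4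

/-- the infinitesimal relation coming from unipotent elements, vector form -/
lemma unip_rel (e : Module.Basis ι K V) {f : ((V ⊗[K] V) ⊗[K] (symBil K V)) →ₗ[K] V}
    (hf : EqvMap f) (p q : ι) (hpq : p ≠ q) (a b i j k : ι) :
    (if a = q then (1:K) else 0) • f (Bv e p b i j k)
      + (if b = q then (1:K) else 0) • f (Bv e a p i j k)
      + (if k = q then (1:K) else 0) • f (Bv e a b i j p)
      - (if p = i then (1:K) else 0) • f (Bv e a b q j k)
      - (if p = j then (1:K) else 0) • f (Bv e a b i q k)
      - (e.coord q (f (Bv e a b i j k))) • e p = 0 := by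
  set D1 : K := (if a = q then (1:K) else 0) with hD1
  set D2 : K := (if b = q then (1:K) else 0) with hD2
  set G0 : symBil K V := Fs e i j k with hG0
  set G1 : symBil K V := (if k = q then (1:K) else 0) • Fs e i j p
      - (if p = i then (1:K) else 0) • Fs e q j k
      - (if p = j then (1:K) else 0) • Fs e i q k with hG1
  set G2 : symBil K V := ((if p = i then (1:K) else 0) * (if p = j then (1:K) else 0)) • Fs e q q k
      - ((if k = q then (1:K) else 0) * (if p = i then (1:K) else 0)) • Fs e q j p
      - ((if k = q then (1:K) else 0) * (if p = j then (1:K) else 0)) • Fs e i q p with hG2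
  set G3 : symBil K V := ((if k = q then (1:K) else 0) * (if p = i then (1:K) else 0)
      * (if p = j then (1:K) else 0)) • Fs e q q p with hG3
  have key : D1 • f ((e p ⊗ₜ[K] e b) ⊗ₜ[K] G0)
      + D2 • f ((e a ⊗ₜ[K] e p) ⊗ₜ[K] G0)
      + f ((e a ⊗ₜ[K] e b) ⊗ₜ[K] G1)
      - (e.coord q (f ((e a ⊗ₜ[K] e b) ⊗ₜ[K] G0))) • e p = 0 := by
    apply coeff_one_of_poly (K := K) (V := V) 0 _
      ((D1*D2) • f ((e p ⊗ₜ[K] e p) ⊗ₜ[K] G0)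
        + D1 • f ((e p ⊗ₜ[K] e b) ⊗ₜ[K] G1)
        + D2 • f ((e a ⊗ₜ[K] e p) ⊗ₜ[K] G1)
        + f ((e a ⊗ₜ[K] e b) ⊗ₜ[K] G2))
      ((D1*D2) • f ((e p ⊗ₜ[K] e p) ⊗ₜ[K] G1)
        + D1 • f ((e p ⊗ₜ[K] e b) ⊗ₜ[K] G2)
        + D2 • f ((e a ⊗ₜ[K] e p) ⊗ₜ[K] G2)
        + f ((e a ⊗ₜ[K] e b) ⊗ₜ[K] G3))
      ((D1*D2) • f ((e p ⊗ₜ[K] e p) ⊗ₜ[K] G2)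
        + D1 • f ((e p ⊗ₜ[K] e b) ⊗ₜ[K] G3)
        + D2 • f ((e a ⊗ₜ[K] e p) ⊗ₜ[K] G3))
      ((D1*D2) • f ((e p ⊗ₜ[K] e p) ⊗ₜ[K] G3))
    intro s
    have h := eqv_apply hf (unipE e p q hpq s) (e a) (e b) (Fs e i j k)
    rw [glSymBil_unip_Fs] at h
    rw [unipE_apply, unipE_apply, unipE_apply, coord_basis, coord_basis] at h
    rw [← hD1, ← hD2, ← hG0, ← hG1, ← hG2, ← hG3] at h
    simp only [TensorProduct.tmul_add, TensorProduct.add_tmul,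
      TensorProduct.smul_tmul, TensorProduct.tmul_smul,
      map_add, map_smul, smul_smul] at h
    linear_combination (norm := module) h
  rw [hG1, hG0] at key
  simp only [TensorProduct.tmul_sub, TensorProduct.tmul_smul, map_sub, map_smul] at key
  rw [hD1, hD2] at key
  have hB : ∀ (x y i' j' k' : ι), ((e x ⊗ₜ[K] e y) ⊗ₜ[K] Fs e i' j' k') = Bv e x y i' j' k' :=
    fun _ _ _ _ _ => rfl
  rw [hB, hB, hB, hB, hB, hB] at key
  linear_combination (norm := module) key

/-- the infinitesimal relation, coefficient form -/
lemma unip_rel_coeff (e : Module.Basis ι K V) {f : ((V ⊗[K] V) ⊗[K] (symBil K V)) →ₗ[K] V}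
    (hf : EqvMap f) (p q : ι) (hpq : p ≠ q) (a b i j k m : ι) :
    (if a = q then (1:K) else 0) * Tc e f p b i j k m
      + (if b = q then (1:K) else 0) * Tc e f a p i j k m
      + (if k = q then (1:K) else 0) * Tc e f a b i j p m
      - (if p = i then (1:K) else 0) * Tc e f a b q j k m
      - (if p = j then (1:K) else 0) * Tc e f a b i q k m
      - Tc e f a b i j k q * (if p = m then (1:K) else 0) = 0 := by
  have h := unip_rel e hf p q hpq a b i j k
  have h2 := congrArg (fun v => e.repr v m) h
  simp only [map_add, map_sub, map_smul, Finsupp.add_apply, Finsupp.sub_apply,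
    Finsupp.smul_apply, smul_eq_mul, map_zero, Finsupp.coe_zero, Pi.zero_apply,
    Module.Basis.repr_self, Finsupp.single_apply, Module.Basis.coord_apply] at h2
  simpa only [Tc, Bv, Module.Basis.coord_apply] using h2

end Aux5
section Aux6

variable {ι : Type} [Fintype ι] [DecidableEq ι]

lemma count_cases {P Q R : Prop} [Decidable P] [Decidable Q] [Decidable R]
    (h : ((if P then 1 else 0) + (if Q then 1 else 0) + (if R then 1 else 0) : ℕ) = 1) :
    (P ∧ ¬Q ∧ ¬R) ∨ (¬P ∧ Q ∧ ¬R) ∨ (¬P ∧ ¬Q ∧ R) := by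
  by_cases hP : P <;> by_cases hQ : Q <;> by_cases hR : R <;>
    simp [hP, hQ, hR] at h ⊢

lemma exists_third {x0 x1 x2 : ι} (h01 : x0 ≠ x1) (h02 : x0 ≠ x2) (h12 : x1 ≠ x2)
    (x y : ι) : ∃ z : ι, z ≠ x ∧ z ≠ y := by
  by_cases h0 : x0 ≠ x ∧ x0 ≠ y
  · exact ⟨x0, h0⟩
  by_cases h1 : x1 ≠ x ∧ x1 ≠ y
  · exact ⟨x1, h1⟩
  by_cases h2 : x2 ≠ x ∧ x2 ≠ y
  · exact ⟨x2, h2⟩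
  exfalso
  push_neg at h0 h1 h2
  have c0 : x0 = x ∨ x0 = y := by tauto
  have c1 : x1 = x ∨ x1 = y := by tauto
  have c2 : x2 = x ∨ x2 = y := by tauto
  rcases c0 with h|h <;> rcases c1 with h'|h' <;> rcases c2 with h''|h'' <;>
    simp_all

lemma exists_perm_triple (a b c a' b' c' : ι) (hab : a ≠ b) (hac : a ≠ c)
    (hbc : b ≠ c) (hab' : a' ≠ b') (hac' : a' ≠ c') (hbc' : b' ≠ c') :
    ∃ σ : Equiv.Perm ι, σ a = a' ∧ σ b = b' ∧ σ c = c' := by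
  classical
  set σ1 : Equiv.Perm ι := Equiv.swap a a' with hσ1
  have e1 : σ1 a = a' := Equiv.swap_apply_left a a'
  set b2 : ι := σ1.symm b' with hb2
  have e2 : σ1 b2 = b' := Equiv.apply_symm_apply σ1 b'
  have hb2a : b2 ≠ a := fun h => hab' (by rw [← e1, ← e2, h])
  set σ2 : Equiv.Perm ι := Equiv.swap b b2 with hσ2
  have f1 : σ2 b = b2 := Equiv.swap_apply_left b b2
  have f2 : σ2 a = a := Equiv.swap_apply_of_ne_of_ne hab (Ne.symm hb2a)
  set c3 : ι := σ2.symm (σ1.symm c') with hc3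
  have g0 : σ1 (σ2 c3) = c' := by rw [hc3]; simp
  have hc3a : c3 ≠ a := by
    intro h
    apply hac'
    rw [← e1, ← g0, h, f2]
  have hc3b : c3 ≠ b := by
    intro h
    apply hbc'
    rw [← e2, ← g0, h, f1]
  set σ3 : Equiv.Perm ι := Equiv.swap c c3 with hσ3
  have k1 : σ3 c = c3 := Equiv.swap_apply_left c c3
  have k2 : σ3 a = a := Equiv.swap_apply_of_ne_of_ne hac (Ne.symm hc3a)
  have k3 : σ3 b = b := Equiv.swap_apply_of_ne_of_ne hbc (Ne.symm hc3b)
  refine ⟨(σ3.trans σ2).trans σ1, ?_, ?_, ?_⟩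
  · simp only [Equiv.trans_apply]
    rw [k2, f2, e1]
  · simp only [Equiv.trans_apply]
    rw [k3, f1, e2]
  · simp only [Equiv.trans_apply]
    rw [k1]
    exact g0

/-- all coefficients with pairwise distinct (a,b,k) vanish -/
lemma Tc_zero_distinct (e : Module.Basis ι K V)
    {f : ((V ⊗[K] V) ⊗[K] (symBil K V)) →ₗ[K] V} (hf : EqvMap f)
    (seed0 : ∀ x y z : ι, x ≠ y → x ≠ z → y ≠ z → Tc e f x y x y z z = 0)
    (seed1 : ∀ x y z : ι, x ≠ y → x ≠ z → y ≠ z → Tc e f x z x y y z = 0)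
    (seed2 : ∀ x y z : ι, x ≠ y → x ≠ z → y ≠ z → Tc e f z x x y y z = 0)
    (a b i j k m : ι) (hab : a ≠ b) (hak : a ≠ k) (hbk : b ≠ k) :
    Tc e f a b i j k m = 0 := by
  by_contra hT
  have hW := weight_rel e hf a b i j k m hT
  have Ea : ((if i = a then 1 else 0) + (if j = a then 1 else 0)
      + (if m = a then 1 else 0) : ℕ) = 1 := by
    have h := (hW a).symm
    simpa [Ne.symm hab, Ne.symm hak] using h
  have Eb : ((if i = b then 1 else 0) + (if j = b then 1 else 0)
      + (if m = b then 1 else 0) : ℕ) = 1 := by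
    have h := (hW b).symm
    simpa [hab, Ne.symm hbk] using h
  have Ek : ((if i = k then 1 else 0) + (if j = k then 1 else 0)
      + (if m = k then 1 else 0) : ℕ) = 1 := by
    have h := (hW k).symm
    simpa [hak, hbk] using h
  apply hT
  rcases count_cases Ea with ⟨hia, hja, hma⟩ | ⟨hia, hja, hma⟩ | ⟨hia, hja, hma⟩
  · -- i = a
    rcases count_cases Eb with ⟨hib, hjb, hmb⟩ | ⟨hib, hjb, hmb⟩ | ⟨hib, hjb, hmb⟩
    · exact absurd (hia ▸ hib ▸ rfl : a = b).symm (Ne.symm hab)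
    · -- j = b ; then m = k
      have hmk : m = k := by
        rcases count_cases Ek with ⟨h', _, _⟩ | ⟨_, h', _⟩ | ⟨_, _, h'⟩
        · exact absurd (hia ▸ h' ▸ rfl : a = k).symm (Ne.symm hak)
        · exact absurd (hjb ▸ h' ▸ rfl : b = k).symm (Ne.symm hbk)
        · exact h'
      subst hia; subst hjb; subst hmk
      exact seed0 i j m hab hak hbk
    · -- m = b ; then j = k
      have hjk : j = k := by
        rcases count_cases Ek with ⟨h', _, _⟩ | ⟨_, h', _⟩ | ⟨_, _, h'⟩
        · exact absurd (hia ▸ h' ▸ rfl : a = k).symm (Ne.symm hak)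
        · exact h'
        · exact absurd (hmb ▸ h' ▸ rfl : b = k).symm (Ne.symm hbk)
      subst hia; subst hmb; subst hjk
      exact seed1 i j m hak hab (Ne.symm hbk)
  · -- j = a
    rcases count_cases Eb with ⟨hib, hjb, hmb⟩ | ⟨hib, hjb, hmb⟩ | ⟨hib, hjb, hmb⟩
    · -- i = b ; then m = k
      have hmk : m = k := by
        rcases count_cases Ek with ⟨h', _, _⟩ | ⟨_, h', _⟩ | ⟨_, _, h'⟩
        · exact absurd (hib ▸ h' ▸ rfl : b = k).symm (Ne.symm hbk)
        · exact absurd (hja ▸ h' ▸ rfl : a = k).symm (Ne.symm hak)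
        · exact h'
      subst hja; subst hib; subst hmk
      rw [Tc_symm]
      exact seed0 j i m hab hak hbk
    · exact absurd (hja ▸ hjb ▸ rfl : a = b).symm (Ne.symm hab)
    · -- m = b ; then i = k
      have hik : i = k := by
        rcases count_cases Ek with ⟨h', _, _⟩ | ⟨_, h', _⟩ | ⟨_, _, h'⟩
        · exact h'
        · exact absurd (hja ▸ h' ▸ rfl : a = k).symm (Ne.symm hak)
        · exact absurd (hmb ▸ h' ▸ rfl : b = k).symm (Ne.symm hbk)
      subst hja; subst hmb; subst hik
      rw [Tc_symm]
      exact seed1 j i m hak hab (Ne.symm hbk)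
  · -- m = a
    rcases count_cases Eb with ⟨hib, hjb, hmb⟩ | ⟨hib, hjb, hmb⟩ | ⟨hib, hjb, hmb⟩
    · -- i = b ; then j = k
      have hjk : j = k := by
        rcases count_cases Ek with ⟨h', _, _⟩ | ⟨_, h', _⟩ | ⟨_, _, h'⟩
        · exact absurd (hib ▸ h' ▸ rfl : b = k).symm (Ne.symm hbk)
        · exact h'
        · exact absurd (hma ▸ h' ▸ rfl : a = k).symm (Ne.symm hak)
      subst hma; subst hib; subst hjk
      exact seed2 i j m hbk (Ne.symm hab) (Ne.symm hak)
    · -- j = b ; then i = k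
      have hik : i = k := by
        rcases count_cases Ek with ⟨h', _, _⟩ | ⟨_, h', _⟩ | ⟨_, _, h'⟩
        · exact h'
        · exact absurd (hjb ▸ h' ▸ rfl : b = k).symm (Ne.symm hbk)
        · exact absurd (hma ▸ h' ▸ rfl : a = k).symm (Ne.symm hak)
      subst hma; subst hjb; subst hik
      rw [Tc_symm]
      exact seed2 j i m hbk (Ne.symm hab) (Ne.symm hak)
    · exact absurd (hma ▸ hmb ▸ rfl : a = b).symm (Ne.symm hab)

end Aux6
section Aux7

variable {ι : Type} [Fintype ι] [DecidableEq ι]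

/-- all coefficients vanish, given vanishing on the distinct-(a,b,k) stratum -/
lemma Tc_zero_all (e : Module.Basis ι K V)
    {f : ((V ⊗[K] V) ⊗[K] (symBil K V)) →ₗ[K] V} (hf : EqvMap f)
    (hα : ∀ a b i j k m : ι, a ≠ b → a ≠ k → b ≠ k → Tc e f a b i j k m = 0)
    (hthird : ∀ x y : ι, ∃ z : ι, z ≠ x ∧ z ≠ y) :
    ∀ a b i j k m : ι, Tc e f a b i j k m = 0 := by
  -- step (i): a = b, a ≠ k
  have caseI : ∀ a i j k m : ι, a ≠ k → Tc e f a a i j k m = 0 := by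
    intro a i j k m hak
    obtain ⟨z, hza, hzk⟩ := hthird a k
    have hrel := unip_rel_coeff e hf a z (Ne.symm hza) z a i j k m
    have z4 : Tc e f z a z j k m = 0 := hα z a z j k m hza hzk hak
    have z5 : Tc e f z a i z k m = 0 := hα z a i z k m hza hzk hak
    have z6 : Tc e f z a i j k z = 0 := hα z a i j k z hza hzk hak
    rw [z4, z5, z6] at hrel
    simpa [Ne.symm hza, Ne.symm hzk] using hrel
  -- step (ii): a = k, a ≠ b
  have caseII : ∀ a b i j m : ι, a ≠ b → Tc e f a b i j a m = 0 := by
    intro a b i j m hab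
    obtain ⟨z, hza, hzb⟩ := hthird a b
    have hrel := unip_rel_coeff e hf a z (Ne.symm hza) z b i j a m
    have z4 : Tc e f z b z j a m = 0 := hα z b z j a m hzb hza (Ne.symm hab)
    have z5 : Tc e f z b i z a m = 0 := hα z b i z a m hzb hza (Ne.symm hab)
    have z6 : Tc e f z b i j a z = 0 := hα z b i j a z hzb hza (Ne.symm hab)
    rw [z4, z5, z6] at hrel
    simpa [Ne.symm hza, Ne.symm hzb] using hrel
  -- step (iii): b = k, a ≠ b
  have caseIII : ∀ a b i j m : ι, a ≠ b → Tc e f a b i j b m = 0 := by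
    intro a b i j m hab
    obtain ⟨z, hzb, hza⟩ := hthird b a
    have hrel := unip_rel_coeff e hf b z (Ne.symm hzb) a z i j b m
    have z4 : Tc e f a z z j b m = 0 := hα a z z j b m (Ne.symm hza) hab hzb
    have z5 : Tc e f a z i z b m = 0 := hα a z i z b m (Ne.symm hza) hab hzb
    have z6 : Tc e f a z i j b z = 0 := hα a z i j b z (Ne.symm hza) hab hzb
    rw [z4, z5, z6] at hrel
    simpa [Ne.symm hza, Ne.symm hzb] using hrel
  -- step (iv): a = b = k
  have caseIV : ∀ a i j m : ι, Tc e f a a i j a m = 0 := by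
    intro a i j m
    obtain ⟨z, hza, _⟩ := hthird a a
    have hrel := unip_rel_coeff e hf a z (Ne.symm hza) z a i j a m
    have z4 : Tc e f z a z j a m = 0 := caseIII z a z j m hza
    have z5 : Tc e f z a i z a m = 0 := caseIII z a i z m hza
    have z6 : Tc e f z a i j a z = 0 := caseIII z a i j z hza
    rw [z4, z5, z6] at hrel
    simpa [Ne.symm hza] using hrel
  intro a b i j k m
  by_cases hab : a = b
  · subst hab
    by_cases hak : a = k
    · subst hak
      exact caseIV a i j m
    · exact caseI a i j k m hak
  · by_cases hak : a = k
    · subst hak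
      exact caseII a b i j m hab
    · by_cases hbk : b = k
      · subst hbk
        exact caseIII a b i j m hab
      · exact hα a b i j k m hab hak hbk

/-- main classification : an equivariant map whose three seed coefficients vanish
is zero on all basis coefficients -/
lemma Tc_zero_of_seeds (e : Module.Basis ι K V)
    {f : ((V ⊗[K] V) ⊗[K] (symBil K V)) →ₗ[K] V} (hf : EqvMap f)
    (x0 x1 x2 : ι) (h01 : x0 ≠ x1) (h02 : x0 ≠ x2) (h12 : x1 ≠ x2)
    (hs0 : Tc e f x0 x1 x0 x1 x2 x2 = 0)
    (hs1 : Tc e f x0 x2 x0 x1 x1 x2 = 0)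
    (hs2 : Tc e f x2 x0 x0 x1 x1 x2 = 0) :
    ∀ a b i j k m : ι, Tc e f a b i j k m = 0 := by
  have seed0 : ∀ x y z : ι, x ≠ y → x ≠ z → y ≠ z → Tc e f x y x y z z = 0 := by
    intro x y z hxy hxz hyz
    obtain ⟨σ, h0, h1, h2⟩ :=
      exists_perm_triple x0 x1 x2 x y z h01 h02 h12 hxy hxz hyz
    have h := perm_rel e hf σ x0 x1 x0 x1 x2 x2
    rw [h0, h1, h2] at h
    exact h.trans hs0
  have seed1 : ∀ x y z : ι, x ≠ y → x ≠ z → y ≠ z → Tc e f x z x y y z = 0 := by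
    intro x y z hxy hxz hyz
    obtain ⟨σ, h0, h1, h2⟩ :=
      exists_perm_triple x0 x1 x2 x y z h01 h02 h12 hxy hxz hyz
    have h := perm_rel e hf σ x0 x2 x0 x1 x1 x2
    rw [h0, h1, h2] at h
    exact h.trans hs1
  have seed2 : ∀ x y z : ι, x ≠ y → x ≠ z → y ≠ z → Tc e f z x x y y z = 0 := by
    intro x y z hxy hxz hyz
    obtain ⟨σ, h0, h1, h2⟩ :=
      exists_perm_triple x0 x1 x2 x y z h01 h02 h12 hxy hxz hyz
    have h := perm_rel e hf σ x2 x0 x0 x1 x1 x2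
    rw [h0, h1, h2] at h
    exact h.trans hs2
  exact Tc_zero_all e hf
    (fun a b i j k m hab hak hbk =>
      Tc_zero_distinct e hf seed0 seed1 seed2 a b i j k m hab hak hbk)
    (exists_third h01 h02 h12)

end Aux7
section Aux8

variable {ι : Type} [Fintype ι] [DecidableEq ι]

lemma m0_Bv (e : Module.Basis ι K V) (a b i j k : ι) :
    m0 (Bv e a b i j k)
      = ((if a = i then (1:K) else 0) * (if b = j then (1:K) else 0)
          + (if a = j then (1:K) else 0) * (if b = i then (1:K) else 0)) • e k := by
  have h : Bv e a b i j k = (e a ⊗ₜ[K] e b) ⊗ₜ[K] Fs e i j k := rfl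
  rw [h, m0_tmul]
  exact Fb_basis e i j k a b

lemma m1_Bv (e : Module.Basis ι K V) (a b i j k : ι) :
    m1 (Bv e a b i j k)
      = ((if a = i then (1:K) else 0) * (if k = j then (1:K) else 0)
          + (if a = j then (1:K) else 0) * (if k = i then (1:K) else 0)) • e b := by
  have h : Bv e a b i j k = (e a ⊗ₜ[K] e b) ⊗ₜ[K] Fs e i j k := rfl
  rw [h, m1_tmul]
  have h2 : ((Fs e i j k : symBil K V) : (V ⊗[K] V) →ₗ[K] V) = Fb e i j k := rfl
  rw [h2, trace_lcurry_Fb, coord_basis, coord_basis]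

lemma m2_Bv (e : Module.Basis ι K V) (a b i j k : ι) :
    m2 (Bv e a b i j k)
      = ((if b = i then (1:K) else 0) * (if k = j then (1:K) else 0)
          + (if b = j then (1:K) else 0) * (if k = i then (1:K) else 0)) • e a := by
  have h : Bv e a b i j k = (e a ⊗ₜ[K] e b) ⊗ₜ[K] Fs e i j k := rfl
  rw [h, m2_tmul]
  have h2 : ((Fs e i j k : symBil K V) : (V ⊗[K] V) →ₗ[K] V) = Fb e i j k := rfl
  rw [h2, trace_lcurry_Fb, coord_basis, coord_basis]

lemma EqvMap.zero : EqvMap (0 : ((V ⊗[K] V) ⊗[K] (symBil K V)) →ₗ[K] V) := by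
  intro g; simp

lemma EqvMap.add {f g : ((V ⊗[K] V) ⊗[K] (symBil K V)) →ₗ[K] V}
    (hf : EqvMap f) (hg : EqvMap g) : EqvMap (f + g) := by
  intro u
  simp [LinearMap.add_comp, LinearMap.comp_add, hf u, hg u]

lemma EqvMap.smul {f : ((V ⊗[K] V) ⊗[K] (symBil K V)) →ₗ[K] V} (c : K)
    (hf : EqvMap f) : EqvMap (c • f) := by
  intro u
  simp [LinearMap.smul_comp, LinearMap.comp_smul, hf u]

lemma EqvMap.sub {f g : ((V ⊗[K] V) ⊗[K] (symBil K V)) →ₗ[K] V}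
    (hf : EqvMap f) (hg : EqvMap g) : EqvMap (f - g) := by
  intro u
  simp [LinearMap.sub_comp, LinearMap.comp_sub, hf u, hg u]

/-- every symmetric bilinear map is in the span of the basis ones -/
lemma symBil_span (e : Module.Basis ι K V) (F : symBil K V) :
    F ∈ Submodule.span K
      (Set.range (fun p : ι × ι × ι => Fs e p.1 p.2.1 p.2.2)) := by
  set c : ι × ι × ι → K :=
    fun p => e.repr ((F : (V ⊗[K] V) →ₗ[K] V) (e p.1 ⊗ₜ[K] e p.2.1)) p.2.2 with hc
  have hval : (F : (V ⊗[K] V) →ₗ[K] V)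
      = (2⁻¹ : K) • ∑ p : ι × ι × ι, c p • Fb e p.1 p.2.1 p.2.2 := by
    apply (e.tensorProduct e).ext
    rintro ⟨a, b⟩
    rw [Module.Basis.tensorProduct_apply]
    rw [LinearMap.smul_apply, LinearMap.sum_apply]
    simp only [LinearMap.smul_apply, Fb_basis, Fintype.sum_prod_type, hc]
    simp only [smul_smul, mul_add, mul_ite, mul_one, mul_zero, ite_mul, one_mul,
      zero_mul, add_smul, ite_smul, zero_smul, one_smul, smul_ite, smul_zero,
      smul_add, Finset.sum_ite_irrel, Finset.sum_const_zero,
      Finset.sum_add_distrib, Finset.sum_ite_eq, Finset.sum_ite_eq',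
      Finset.mem_univ, if_true]
    have hsym : (F : (V ⊗[K] V) →ₗ[K] V) (e b ⊗ₜ[K] e a)
        = (F : (V ⊗[K] V) →ₗ[K] V) (e a ⊗ₜ[K] e b) := F.2 (e b) (e a)
    rw [hsym, Module.Basis.sum_repr]
    module
  have hcoe : ((((2⁻¹ : K) • ∑ p : ι × ι × ι, c p • Fs e p.1 p.2.1 p.2.2) :
        symBil K V) : (V ⊗[K] V) →ₗ[K] V)
      = (2⁻¹ : K) • ∑ p : ι × ι × ι, c p • Fb e p.1 p.2.1 p.2.2 := by
    push_cast [SetLike.val_smul, AddSubmonoidClass.coe_finset_sum]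
    rfl
  have hF : F = (2⁻¹ : K) • ∑ p : ι × ι × ι, c p • Fs e p.1 p.2.1 p.2.2 :=
    Subtype.ext (hval.trans hcoe.symm)
  rw [hF]
  apply Submodule.smul_mem
  apply Submodule.sum_mem
  intro p _
  apply Submodule.smul_mem
  exact Submodule.subset_span ⟨p, rfl⟩

/-- a linear map vanishing on all basis vectors is zero -/
lemma map_zero_of_Bv_zero (e : Module.Basis ι K V)
    (f : ((V ⊗[K] V) ⊗[K] (symBil K V)) →ₗ[K] V)
    (h : ∀ a b i j k : ι, f (Bv e a b i j k) = 0) : f = 0 := by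
  have huF : ∀ (i j k : ι) (u : V ⊗[K] V), f (u ⊗ₜ[K] Fs e i j k) = 0 := by
    intro i j k u
    have hcomp : f ∘ₗ (TensorProduct.mk K (V ⊗[K] V) (symBil K V)).flip
        (Fs e i j k) = 0 := by
      apply (e.tensorProduct e).ext
      rintro ⟨a, b⟩
      rw [Module.Basis.tensorProduct_apply]
      simpa [Bv] using h a b i j k
    simpa using LinearMap.congr_fun hcomp u
  apply TensorProduct.ext'
  intro u F
  rw [LinearMap.zero_apply]
  have hF := symBil_span e F
  refine Submodule.span_induction ?_ ?_ ?_ ?_ hF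
  · rintro G ⟨p, rfl⟩
    exact huF p.1 p.2.1 p.2.2 u
  · simp
  · intro G1 G2 _ _ h1 h2
    rw [TensorProduct.tmul_add, map_add, h1, h2]
    exact zero_add 0
  · intro c G _ hG
    rw [TensorProduct.tmul_smul, map_smul, hG, smul_zero]

end Aux8
/-- If `dim V ≥ 3`, the space of `GL(V)`-equivariant linear maps
`Lin(V^{⊗2} ⊗ Sym(V^{⊗2}, V), V)` is 3-dimensional, spanned by
`X⊗Y⊗F ↦ F(X,Y)`, `X⊗Y⊗F ↦ Tr(F(X,−))·Y` and `X⊗Y⊗F ↦ Tr(F(Y,−))·X`: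
these three maps are linearly independent and a map is equivariant iff it lies
in their span. -/
theorem equivariant_space_sym_three_dimensional
    (h3 : 3 ≤ Module.finrank K V) :
    ∃ m : Fin 3 → (((V ⊗[K] V) ⊗[K] (symBil K V)) →ₗ[K] V),
      (∀ (X Y : V) (F : symBil K V),
          m 0 ((X ⊗ₜ[K] Y) ⊗ₜ[K] F) = (F : (V ⊗[K] V) →ₗ[K] V) (X ⊗ₜ[K] Y) ∧
          m 1 ((X ⊗ₜ[K] Y) ⊗ₜ[K] F) =
            (LinearMap.trace K V
              (TensorProduct.lcurry (RingHom.id K) V V V (F : (V ⊗[K] V) →ₗ[K] V) X)) • Y ∧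
          m 2 ((X ⊗ₜ[K] Y) ⊗ₜ[K] F) =
            (LinearMap.trace K V
              (TensorProduct.lcurry (RingHom.id K) V V V (F : (V ⊗[K] V) →ₗ[K] V) Y)) • X) ∧
      LinearIndependent K m ∧
      (∀ f : ((V ⊗[K] V) ⊗[K] (symBil K V)) →ₗ[K] V,
        (∀ g : V ≃ₗ[K] V,
          f ∘ₗ TensorProduct.map
              (TensorProduct.map g.toLinearMap g.toLinearMap) (glSymBil g) =
            g.toLinearMap ∘ₗ f) ↔
        f ∈ Submodule.span K (Set.range m)) := by
  classical
  set e : Module.Basis (Fin (Module.finrank K V)) K V := Module.finBasis K V with he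
  set x0 : Fin (Module.finrank K V) := ⟨0, by omega⟩ with hx0
  set x1 : Fin (Module.finrank K V) := ⟨1, by omega⟩ with hx1
  set x2 : Fin (Module.finrank K V) := ⟨2, by omega⟩ with hx2
  have h01 : x0 ≠ x1 := by simp [hx0, hx1, Fin.ext_iff]
  have h02 : x0 ≠ x2 := by simp [hx0, hx2, Fin.ext_iff]
  have h12 : x1 ≠ x2 := by simp [hx1, hx2, Fin.ext_iff]
  refine ⟨![m0, m1, m2], ?_, ?_, ?_⟩
  · intro X Y F
    refine ⟨?_, ?_, ?_⟩
    · show m0 ((X ⊗ₜ[K] Y) ⊗ₜ[K] F) = _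
      rw [m0_tmul]
    · show m1 ((X ⊗ₜ[K] Y) ⊗ₜ[K] F) = _
      rw [m1_tmul]
    · show m2 ((X ⊗ₜ[K] Y) ⊗ₜ[K] F) = _
      rw [m2_tmul]
  · rw [Fintype.linearIndependent_iff]
    intro g hg
    have E1 := LinearMap.congr_fun hg (Bv e x0 x2 x0 x1 x1)
    have E2 := LinearMap.congr_fun hg (Bv e x2 x0 x0 x1 x1)
    have E0 := LinearMap.congr_fun hg (Bv e x0 x1 x0 x1 x2)
    simp only [Fin.sum_univ_three, LinearMap.add_apply, LinearMap.smul_apply,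
      Matrix.cons_val_zero, Matrix.cons_val_one, Matrix.head_cons,
      Matrix.cons_val_two, Matrix.tail_cons, LinearMap.zero_apply,
      m0_Bv, m1_Bv, m2_Bv] at E0 E1 E2
    simp only [if_true, h01, h02, h12, Ne.symm h01, Ne.symm h02, Ne.symm h12,
      if_false, mul_one, mul_zero, zero_mul, one_mul, add_zero, zero_add,
      zero_smul, smul_zero, one_smul] at E0 E1 E2
    have hg1 : g 1 = 0 := by
      rcases smul_eq_zero.mp E1 with h | h
      · exact h
      · exact absurd h (e.ne_zero x2)
    have hg2 : g 2 = 0 := by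
      rcases smul_eq_zero.mp E2 with h | h
      · exact h
      · exact absurd h (e.ne_zero x2)
    have hg0 : g 0 = 0 := by
      rcases smul_eq_zero.mp E0 with h | h
      · exact h
      · exact absurd h (e.ne_zero x2)
    intro i
    fin_cases i
    · exact hg0
    · exact hg1
    · exact hg2
  · intro f
    constructor
    · intro hf
      have hEf : EqvMap f := hf
      set c0 : K := Tc e f x0 x1 x0 x1 x2 x2 with hc0
      set c1 : K := Tc e f x0 x2 x0 x1 x1 x2 with hc1
      set c2 : K := Tc e f x2 x0 x0 x1 x1 x2 with hc2
      set f' : ((V ⊗[K] V) ⊗[K] (symBil K V)) →ₗ[K] V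
        := f - c0 • m0 - c1 • m1 - c2 • m2 with hf'
      have hEf' : EqvMap f' :=
        EqvMap.sub (EqvMap.sub (EqvMap.sub hEf (EqvMap.smul c0 m0_equiv))
          (EqvMap.smul c1 m1_equiv)) (EqvMap.smul c2 m2_equiv)
      have hTf' : ∀ a b i j k m, Tc e f' a b i j k m
          = Tc e f a b i j k m
            - c0 * e.repr (m0 (Bv e a b i j k)) m
            - c1 * e.repr (m1 (Bv e a b i j k)) m
            - c2 * e.repr (m2 (Bv e a b i j k)) m := by
        intro a b i j k m
        have h : Tc e f' a b i j k m = e.repr (f' (Bv e a b i j k)) m := rfl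
        rw [h, hf']
        simp only [LinearMap.sub_apply, LinearMap.smul_apply, map_sub, map_smul,
          Finsupp.sub_apply, Finsupp.smul_apply, smul_eq_mul]
        rfl
      have hs0 : Tc e f' x0 x1 x0 x1 x2 x2 = 0 := by
        rw [hTf', m0_Bv, m1_Bv, m2_Bv]
        simp [h01, h02, h12, Ne.symm h01, Ne.symm h02, Ne.symm h12,
          Module.Basis.repr_self, Finsupp.single_apply, hc0]
      have hs1 : Tc e f' x0 x2 x0 x1 x1 x2 = 0 := by
        rw [hTf', m0_Bv, m1_Bv, m2_Bv]
        simp [h01, h02, h12, Ne.symm h01, Ne.symm h02, Ne.symm h12,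
          Module.Basis.repr_self, Finsupp.single_apply, hc1]
      have hs2 : Tc e f' x2 x0 x0 x1 x1 x2 = 0 := by
        rw [hTf', m0_Bv, m1_Bv, m2_Bv]
        simp [h01, h02, h12, Ne.symm h01, Ne.symm h02, Ne.symm h12,
          Module.Basis.repr_self, Finsupp.single_apply, hc2]
      have hz := Tc_zero_of_seeds e hEf' x0 x1 x2 h01 h02 h12 hs0 hs1 hs2
      have hf'0 : f' = 0 := by
        apply map_zero_of_Bv_zero e f'
        intro a b i j k
        have hrep : e.repr (f' (Bv e a b i j k)) = 0 := by
          apply Finsupp.ext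
          intro m
          exact hz a b i j k m
        simpa using (LinearEquiv.map_eq_zero_iff e.repr).mp hrep
      have hfe : f = c0 • m0 + c1 • m1 + c2 • m2 := by
        rw [hf', sub_sub, sub_sub, sub_eq_zero] at hf'0
        rw [hf'0]
        abel
      rw [hfe]
      have hm0 : m0 ∈ Set.range ![m0 (K := K) (V := V), m1, m2] := ⟨0, rfl⟩
      have hm1 : m1 ∈ Set.range ![m0 (K := K) (V := V), m1, m2] := ⟨1, rfl⟩
      have hm2 : m2 ∈ Set.range ![m0 (K := K) (V := V), m1, m2] := ⟨2, rfl⟩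
      exact Submodule.add_mem _
        (Submodule.add_mem _
          (Submodule.smul_mem _ _ (Submodule.subset_span hm0))
          (Submodule.smul_mem _ _ (Submodule.subset_span hm1)))
        (Submodule.smul_mem _ _ (Submodule.subset_span hm2))
    · intro hmem
      have hEf : EqvMap f := by
        refine Submodule.span_induction ?_ ?_ ?_ ?_ hmem
        · rintro x ⟨i, rfl⟩
          fin_cases i
          · exact m0_equiv
          · exact m1_equiv
          · exact m2_equiv
        · exact EqvMap.zero
        · intro p q _ _ hp hq
          exact EqvMap.add hp hq
        · intro c p _ hp
          exact EqvMap.smul c hp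
      exact hEf
end
end
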